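/- arXiv:2403.01914 — 4 statements merged into one kernel-verified Lean document; each statement's English description precedes it below -/
import Mathlib

section
/- Let $m \ge 1$ and let $d_1, d_2$ be divisors of $m$. Then $\sum_{d \mid m} C_{d_1}(m/d) \, C_d(m/d_2)$ equals $m$ if $d_1 = d_2$ and equals $0$ otherwise. -/
open Finset ArithmeticFunction ArithmeticFunction.Moebius ArithmeticFunction.zeta in
theorem sum_moeb (n : ℕ) (hn : n ≠ 0) : ∑ d ∈ n.divisors, (μ d : ℤ) = if n = 1 then 1 else 0 := by
  have := congrArg (fun f : ArithmeticFunction ℤ => f n) moebius_mul_coe_zeta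
  simp only [mul_apply, ArithmeticFunction.one_apply] at this
  rw [Nat.sum_divisorsAntidiagonal (fun x y => (μ x : ℤ) * (ζ : ArithmeticFunction ℤ) y)] at this
  rw [← this]
  refine Finset.sum_congr rfl fun d hd => ?_
  rw [Nat.mem_divisors] at hd
  have hd0 : d ≠ 0 := fun h => hn (by simpa [h] using hd.1)
  have h2 : n / d ≠ 0 := Nat.div_ne_zero_iff.mpr ⟨hd0, Nat.le_of_dvd (Nat.pos_of_ne_zero hn) hd.1⟩
  simp [ArithmeticFunction.natCoe_apply, h2]

theorem geom_icc (n : ℕ) (z : ℂ) (hz : z ^ n = 1) :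
    ∑ k ∈ Finset.Icc 1 n, z ^ k = if z = 1 then (n : ℂ) else 0 := by
  have h : ∑ k ∈ Finset.Icc 1 n, z ^ k = ∑ k ∈ Finset.range n, z ^ (k + 1) := by
    rw [← Finset.Ico_add_one_right_eq_Icc, Finset.sum_Ico_eq_sum_range]
    simp [add_comm]
  split_ifs with h1
  · simp [h1]
  · rw [h]
    have : ∑ k ∈ Finset.range n, z ^ (k+1) = z * ∑ k ∈ Finset.range n, z ^ k := by
      rw [Finset.mul_sum]; exact Finset.sum_congr rfl fun k _ => by ring
    rw [this, geom_sum_eq h1, hz]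
    simp

theorem exp_orth (n : ℕ) (hn : n ≠ 0) (a : ℤ) :
    ∑ k ∈ Finset.Icc 1 n, Complex.exp (2 * Real.pi * Complex.I * k * a / n)
      = if (n : ℤ) ∣ a then (n : ℂ) else 0 := by
  have hn' : (n : ℂ) ≠ 0 := Nat.cast_ne_zero.mpr hn
  set z : ℂ := Complex.exp (2 * Real.pi * Complex.I * a / n) with hzdef
  have hpow : ∀ k : ℕ, Complex.exp (2 * Real.pi * Complex.I * k * a / n) = z ^ k := by
    intro k
    rw [hzdef, ← Complex.exp_nat_mul]
    ring_nf
  have hzn : z ^ n = 1 := by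
    rw [← hpow n]
    have : 2 * Real.pi * Complex.I * n * a / n = a * (2 * Real.pi * Complex.I) := by
      field_simp
    rw [this, Complex.exp_int_mul_two_pi_mul_I]
  have hz1 : z = 1 ↔ (n : ℤ) ∣ a := by
    rw [hzdef, Complex.exp_eq_one_iff]
    constructor
    · rintro ⟨m, hm⟩
      refine ⟨m, ?_⟩
      have h2 : (a : ℂ) = n * m := by
        have hpi : (2 * Real.pi * Complex.I : ℂ) ≠ 0 := by
          simp [Real.pi_ne_zero, Complex.I_ne_zero]
        field_simp at hm
        have h3 : (2 * Real.pi * Complex.I) * (a : ℂ) = (2 * Real.pi * Complex.I) * ((n : ℂ) * m) := by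
          rw [hm]
        exact mul_left_cancel₀ hpi h3
      exact_mod_cast h2
    · rintro ⟨m, hm⟩
      refine ⟨m, ?_⟩
      rw [hm]
      push_cast
      field_simp
  simp_rw [hpow]
  rw [geom_icc n z hzn]
  simp [hz1]

noncomputable def ramanujanSum (m : ℕ) (a : ℤ) : ℂ :=
  ∑ j ∈ (Finset.Icc 1 m).filter (fun j => Nat.gcd j m = 1),
    Complex.exp (2 * Real.pi * Complex.I * j * a / m)

open ArithmeticFunction ArithmeticFunction.Moebius in
theorem hoelder (n : ℕ) (hn : n ≠ 0) (a : ℤ) :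
    ramanujanSum n a
      = ∑ f ∈ n.divisors, (if (f : ℤ) ∣ a then (f : ℂ) * ((μ (n / f) : ℤ) : ℂ) else 0) := by
  have hn0 : 0 < n := Nat.pos_of_ne_zero hn
  rw [ramanujanSum, Finset.sum_filter]
  have step1 : ∀ j ∈ Finset.Icc 1 n,
      (if Nat.gcd j n = 1 then Complex.exp (2 * Real.pi * Complex.I * j * a / n) else 0)
      = ∑ e ∈ n.divisors, (if e ∣ j then ((μ e : ℤ) : ℂ) * Complex.exp (2 * Real.pi * Complex.I * j * a / n) else 0) := by
    intro j hj
    have hdiv : (Nat.gcd j n).divisors = n.divisors.filter (· ∣ j) := by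
      ext e
      simp only [Nat.mem_divisors, Finset.mem_filter]
      constructor
      · rintro ⟨he, h0⟩
        exact ⟨⟨(Nat.dvd_gcd_iff.mp he).2, hn⟩, (Nat.dvd_gcd_iff.mp he).1⟩
      · rintro ⟨⟨hen, _⟩, hej⟩
        exact ⟨Nat.dvd_gcd hej hen, Nat.gcd_ne_zero_right hn⟩
    have hm := sum_moeb (Nat.gcd j n) (Nat.gcd_ne_zero_right hn)
    have hcast : ∑ d ∈ (Nat.gcd j n).divisors, ((μ d : ℤ) : ℂ)
        = if Nat.gcd j n = 1 then 1 else 0 := by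
      have := congrArg (fun x : ℤ => (x : ℂ)) hm
      push_cast at this
      simpa using this
    rw [hdiv, Finset.sum_filter] at hcast
    rw [show (if Nat.gcd j n = 1 then Complex.exp (2 * Real.pi * Complex.I * j * a / n) else 0)
        = (if Nat.gcd j n = 1 then (1:ℂ) else 0) * Complex.exp (2 * Real.pi * Complex.I * j * a / n) by
      split_ifs <;> simp]
    rw [← hcast, Finset.sum_mul]
    refine Finset.sum_congr rfl fun e _ => ?_
    split_ifs <;> simp
  rw [Finset.sum_congr rfl step1, Finset.sum_comm]
  have step2 : ∀ e ∈ n.divisors,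
      (∑ j ∈ Finset.Icc 1 n, if e ∣ j then ((μ e : ℤ) : ℂ) * Complex.exp (2 * Real.pi * Complex.I * j * a / n) else 0)
      = ((μ e : ℤ) : ℂ) * (if ((n / e : ℕ) : ℤ) ∣ a then ((n / e : ℕ) : ℂ) else 0) := by
    intro e he
    rw [Nat.mem_divisors] at he
    have he0 : 0 < e := Nat.pos_of_ne_zero (fun h => hn (by simpa [h] using he.1))
    have hne : (n / e) ≠ 0 := Nat.div_ne_zero_iff.mpr ⟨he0.ne', Nat.le_of_dvd hn0 he.1⟩
    rw [← Finset.sum_filter, ← exp_orth (n / e) hne a, Finset.mul_sum]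
    refine Finset.sum_nbij' (fun j => j / e) (fun t => e * t) ?_ ?_ ?_ ?_ ?_
    · intro j hj
      simp only [Finset.mem_filter, Finset.mem_Icc] at hj
      obtain ⟨⟨h1, h2⟩, hej⟩ := hj
      simp only [Finset.mem_Icc]
      exact ⟨(Nat.one_le_div_iff he0).mpr (Nat.le_of_dvd h1 hej), Nat.div_le_div_right h2⟩
    · intro t ht
      simp only [Finset.mem_Icc] at ht
      simp only [Finset.mem_filter, Finset.mem_Icc]
      refine ⟨⟨Nat.one_le_iff_ne_zero.mpr (Nat.mul_ne_zero he0.ne' (by omega)), ?_⟩, Dvd.intro t rfl⟩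
      calc e * t ≤ e * (n / e) := Nat.mul_le_mul_left e ht.2
        _ = n := Nat.mul_div_cancel' he.1
    · intro j hj
      simp only [Finset.mem_filter] at hj
      exact Nat.mul_div_cancel' hj.2
    · intro t _
      exact Nat.mul_div_cancel_left t he0
    · intro j hj
      simp only [Finset.mem_filter, Finset.mem_Icc] at hj
      obtain ⟨⟨h1, h2⟩, hej⟩ := hj
      congr 1
      have hj' : (j : ℂ) = (e : ℂ) * ((j / e : ℕ) : ℂ) := by
        exact_mod_cast congrArg (fun x : ℕ => (x : ℂ)) (Nat.mul_div_cancel' hej).symm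
      have hn'' : (n : ℂ) = (e : ℂ) * ((n / e : ℕ) : ℂ) := by
        exact_mod_cast congrArg (fun x : ℕ => (x : ℂ)) (Nat.mul_div_cancel' he.1).symm
      have he' : (e : ℂ) ≠ 0 := Nat.cast_ne_zero.mpr he0.ne'
      have hnd' : ((n / e : ℕ) : ℂ) ≠ 0 := Nat.cast_ne_zero.mpr hne
      rw [hj', hn'']
      field_simp
  rw [Finset.sum_congr rfl step2]
  rw [← Nat.sum_div_divisors n (f := fun f => (if (f : ℤ) ∣ a then (f : ℂ) * ((μ (n / f) : ℤ) : ℂ) else 0))]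
  refine Finset.sum_congr rfl fun e he => ?_
  rw [Nat.mem_divisors] at he
  have : n / (n / e) = e := Nat.div_div_self he.1 hn
  rw [this]
  split_ifs <;> simp [mul_comm]

theorem ram_gcd (n : ℕ) (hn : n ≠ 0) (d : ℕ) (hd : d ∣ n) (hd0 : d ≠ 0) (k : ℕ) :
    ramanujanSum d ((Nat.gcd k n : ℕ) : ℤ) = ramanujanSum d (k : ℤ) := by
  rw [hoelder d hd0, hoelder d hd0]
  refine Finset.sum_congr rfl fun f hf => ?_
  have hf' : f ∣ d := (Nat.mem_divisors.mp hf).1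
  have hiff : (f : ℤ) ∣ ((Nat.gcd k n : ℕ) : ℤ) ↔ (f : ℤ) ∣ (k : ℤ) := by
    rw [Int.natCast_dvd_natCast, Int.natCast_dvd_natCast]
    exact ⟨fun h => (Nat.dvd_gcd_iff.mp h).1, fun h => Nat.dvd_gcd h (hf'.trans hd)⟩
  simp only [hiff]

theorem nt_iff (d₁ d₂ i : ℕ) (h1 : d₁ ≠ 0) (hi : Nat.gcd i d₁ = 1) :
    d₁ * d₂ ∣ i * d₂ + d₁ ↔ (d₂ = d₁ ∧ d₁ ∣ i + 1) := by
  constructor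
  · intro h
    have hd2 : d₂ ∣ d₁ := by
      have h' : d₂ ∣ i * d₂ + d₁ := dvd_trans (dvd_mul_left d₂ d₁) h
      exact (Nat.dvd_add_right (dvd_mul_left d₂ i)).mp h'
    have hd1 : d₁ ∣ d₂ := by
      have h' : d₁ ∣ i * d₂ + d₁ := dvd_trans (dvd_mul_right d₁ d₂) h
      have h'' : d₁ ∣ i * d₂ := (Nat.dvd_add_iff_left (dvd_refl d₁)).mpr h'
      exact (Nat.Coprime.dvd_of_dvd_mul_left (Nat.coprime_comm.mp hi) h'')
    have heq : d₂ = d₁ := Nat.dvd_antisymm hd2 hd1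
    subst heq
    refine ⟨rfl, ?_⟩
    have h' : d₂ * d₂ ∣ (i + 1) * d₂ := by
      have : (i + 1) * d₂ = i * d₂ + d₂ := by ring
      rwa [this]
    exact (mul_dvd_mul_iff_right (by omega : d₂ ≠ 0)).mp (by rwa [mul_comm d₂ d₂] at h')
  · rintro ⟨rfl, hdvd⟩
    have : i * d₂ + d₂ = (i + 1) * d₂ := by ring
    rw [this]
    exact mul_dvd_mul_right hdvd d₂

theorem count_one (t : ℕ) (ht : 1 ≤ t) (c : ℂ) :
    ∑ i ∈ (Finset.Icc 1 t).filter (fun i => Nat.gcd i t = 1), (if t ∣ i + 1 then c else 0) = c := by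
  rcases Nat.lt_or_ge t 2 with h2 | h2
  · have : t = 1 := by omega
    subst this
    simp
  · refine Finset.sum_eq_single_of_mem (t - 1) ?_ ?_ |>.trans ?_
    · simp only [Finset.mem_filter, Finset.mem_Icc]
      refine ⟨⟨by omega, by omega⟩, ?_⟩
      have h : Nat.gcd (t - 1) (t - 1 + 1) = 1 := by
        simpa using Nat.gcd_self_add_right (t - 1) 1
      simpa [show t - 1 + 1 = t from by omega] using h
    · intro i himem hne
      rw [if_neg]
      intro hdvd
      have hle : t ≤ i + 1 := Nat.le_of_dvd (by omega) hdvd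
      simp only [Finset.mem_filter, Finset.mem_Icc] at himem
      have : i + 1 = t ∨ i + 1 = t + 1 := by omega
      rcases this with h | h
      · exact hne (by omega)
      · rw [h] at hdvd
        have h1 : t ∣ 1 := (Nat.dvd_add_right (dvd_refl t)).mp hdvd
        have := Nat.dvd_one.mp h1
        omega
    · have h3 : t - 1 + 1 = t := by omega
      rw [h3, if_pos (dvd_refl t)]

theorem ramanujanSum_orthogonality (m : ℕ) (hm : 1 ≤ m) (d₁ d₂ : ℕ)
    (h₁ : d₁ ∣ m) (h₂ : d₂ ∣ m) :
    ∑ d ∈ m.divisors,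
        ramanujanSum d₁ ((m / d : ℕ) : ℤ) * ramanujanSum d ((m / d₂ : ℕ) : ℤ) =
      if d₁ = d₂ then (m : ℂ) else 0 := by
  have hm0 : m ≠ 0 := by omega
  have hd₁0 : d₁ ≠ 0 := fun h => hm0 (by simpa [h] using h₁)
  have hd₂0 : d₂ ≠ 0 := fun h => hm0 (by simpa [h] using h₂)
  have hmC : (m : ℂ) ≠ 0 := Nat.cast_ne_zero.mpr hm0
  have hd₁C : (d₁ : ℂ) ≠ 0 := Nat.cast_ne_zero.mpr hd₁0
  have hd₂C : (d₂ : ℂ) ≠ 0 := Nat.cast_ne_zero.mpr hd₂0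
  -- Step A : collapse to a single sum over k ∈ [1, m]
  have expand : ∀ d ∈ m.divisors,
      ramanujanSum d₁ ((m / d : ℕ) : ℤ) * ramanujanSum d ((m / d₂ : ℕ) : ℤ)
      = ∑ j ∈ (Finset.Icc 1 d).filter (fun j => Nat.gcd j d = 1),
          ramanujanSum d₁ ((m / d : ℕ) : ℤ)
            * Complex.exp (2 * Real.pi * Complex.I * j * ((m / d₂ : ℕ) : ℤ) / d) := by
    intro d _
    nth_rewrite 2 [ramanujanSum]
    rw [Finset.mul_sum]
  rw [Finset.sum_congr rfl expand, Finset.sum_sigma']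
  have stepA : ∑ p ∈ m.divisors.sigma
        (fun d => (Finset.Icc 1 d).filter (fun j => Nat.gcd j d = 1)),
        ramanujanSum d₁ ((m / p.1 : ℕ) : ℤ)
          * Complex.exp (2 * Real.pi * Complex.I * p.2 * ((m / d₂ : ℕ) : ℤ) / p.1)
      = ∑ k ∈ Finset.Icc 1 m,
          ramanujanSum d₁ ((Nat.gcd k m : ℕ) : ℤ)
            * Complex.exp (2 * Real.pi * Complex.I * k * ((m / d₂ : ℕ) : ℤ) / m) := by
    refine Finset.sum_nbij' (fun p => p.2 * (m / p.1))
      (fun k => ⟨m / Nat.gcd k m, k / Nat.gcd k m⟩) ?_ ?_ ?_ ?_ ?_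
    · rintro ⟨d, j⟩ hp
      simp only [Finset.mem_sigma, Nat.mem_divisors, Finset.mem_filter, Finset.mem_Icc] at hp
      obtain ⟨⟨hdm, -⟩, ⟨hj1, hjd⟩, -⟩ := hp
      have hd0 : d ≠ 0 := fun h => hm0 (by simpa [h] using hdm)
      have hmd : 1 ≤ m / d := (Nat.one_le_div_iff (Nat.pos_of_ne_zero hd0)).mpr (Nat.le_of_dvd (by omega) hdm)
      simp only [Finset.mem_Icc]
      constructor
      · exact Nat.one_le_iff_ne_zero.mpr (Nat.mul_ne_zero (by omega) (by omega))
      · calc j * (m / d) ≤ d * (m / d) := Nat.mul_le_mul_right _ hjd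
          _ = m := Nat.mul_div_cancel' hdm
    · intro k hk
      simp only [Finset.mem_Icc] at hk
      have hg : 0 < Nat.gcd k m := Nat.gcd_pos_of_pos_left m (by omega)
      have hgk : Nat.gcd k m ∣ k := Nat.gcd_dvd_left k m
      have hgm : Nat.gcd k m ∣ m := Nat.gcd_dvd_right k m
      simp only [Finset.mem_sigma, Nat.mem_divisors, Finset.mem_filter, Finset.mem_Icc]
      refine ⟨⟨Nat.div_dvd_of_dvd hgm, hm0⟩, ⟨?_, Nat.div_le_div_right hk.2⟩, ?_⟩
      · exact (Nat.one_le_div_iff hg).mpr (Nat.le_of_dvd (by omega) hgk)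
      · exact Nat.coprime_div_gcd_div_gcd hg
    · rintro ⟨d, j⟩ hp
      simp only [Finset.mem_sigma, Nat.mem_divisors, Finset.mem_filter, Finset.mem_Icc] at hp
      obtain ⟨⟨hdm, -⟩, ⟨hj1, hjd⟩, hjcop⟩ := hp
      set c := m / d with hc
      have hdc : d * c = m := Nat.mul_div_cancel' hdm
      have hc0 : 0 < c := by
        rcases Nat.eq_zero_or_pos c with h | h
        · rw [h] at hdc; omega
        · exact h
      have key : Nat.gcd (j * c) m = c := by
        rw [← hdc, Nat.gcd_mul_right, hjcop, one_mul]
      simp only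
      rw [key, Nat.mul_div_cancel j hc0, ← hdc, Nat.mul_div_cancel d hc0]
    · intro k hk
      simp only [Finset.mem_Icc] at hk
      have hgm : Nat.gcd k m ∣ m := Nat.gcd_dvd_right k m
      simp only
      rw [Nat.div_div_self hgm hm0, Nat.div_mul_cancel (Nat.gcd_dvd_left k m)]
    · rintro ⟨d, j⟩ hp
      simp only [Finset.mem_sigma, Nat.mem_divisors, Finset.mem_filter, Finset.mem_Icc] at hp
      obtain ⟨⟨hdm, -⟩, ⟨hj1, hjd⟩, hjcop⟩ := hp
      have hd0 : d ≠ 0 := fun h => hm0 (by simpa [h] using hdm)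
      set c := m / d with hc
      have hdc : d * c = m := Nat.mul_div_cancel' hdm
      have hc0 : c ≠ 0 := by
        intro h; rw [h] at hdc; omega
      have key : Nat.gcd (j * c) m = c := by
        rw [← hdc, Nat.gcd_mul_right, hjcop, one_mul]
      simp only [key]
      congr 2
      have hm' : (m : ℂ) = (d : ℂ) * (c : ℂ) := by exact_mod_cast hdc.symm
      have hk' : ((j * c : ℕ) : ℂ) = (j : ℂ) * (c : ℂ) := by push_cast; ring
      rw [hm', hk']
      have hdC : (d : ℂ) ≠ 0 := Nat.cast_ne_zero.mpr hd0
      have hcC : (c : ℂ) ≠ 0 := Nat.cast_ne_zero.mpr hc0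
      field_simp
  rw [stepA]
  have stepB : ∀ k ∈ Finset.Icc 1 m,
      ramanujanSum d₁ ((Nat.gcd k m : ℕ) : ℤ)
          * Complex.exp (2 * Real.pi * Complex.I * k * ((m / d₂ : ℕ) : ℤ) / m)
      = ∑ i ∈ (Finset.Icc 1 d₁).filter (fun i => Nat.gcd i d₁ = 1),
          Complex.exp (2 * Real.pi * Complex.I * i * (k : ℤ) / d₁)
            * Complex.exp (2 * Real.pi * Complex.I * k * ((m / d₂ : ℕ) : ℤ) / m) := by
    intro k _
    rw [ram_gcd m hm0 d₁ h₁ hd₁0 k, ramanujanSum, Finset.sum_mul]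
  rw [Finset.sum_congr rfl stepB, Finset.sum_comm]
  have hmd2 : ((m / d₂ : ℕ) : ℂ) * d₂ = m := by exact_mod_cast Nat.div_mul_cancel h₂
  have hmd1 : ((m / d₁ : ℕ) : ℂ) * d₁ = m := by exact_mod_cast Nat.div_mul_cancel h₁
  have hpi : (2 * Real.pi * Complex.I : ℂ) ≠ 0 := by
    simp [Real.pi_ne_zero, Complex.I_ne_zero]
  have inner : ∀ i ∈ (Finset.Icc 1 d₁).filter (fun i => Nat.gcd i d₁ = 1),
      (∑ k ∈ Finset.Icc 1 m,
        Complex.exp (2 * Real.pi * Complex.I * i * (k : ℤ) / d₁)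
          * Complex.exp (2 * Real.pi * Complex.I * k * ((m / d₂ : ℕ) : ℤ) / m))
      = if (d₂ = d₁ ∧ d₁ ∣ i + 1) then (m : ℂ) else 0 := by
    intro i hi
    simp only [Finset.mem_filter, Finset.mem_Icc] at hi
    obtain ⟨⟨hi1, hid⟩, hicop⟩ := hi
    set w : ℂ := 2 * Real.pi * Complex.I * i / d₁ + 2 * Real.pi * Complex.I / d₂ with hw
    have hterm : ∀ k : ℕ,
        Complex.exp (2 * Real.pi * Complex.I * i * (k : ℤ) / d₁)
          * Complex.exp (2 * Real.pi * Complex.I * k * ((m / d₂ : ℕ) : ℤ) / m)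
        = Complex.exp w ^ k := by
      intro k
      rw [← Complex.exp_nat_mul, ← Complex.exp_add]
      congr 1
      have hdiv : ((m / d₂ : ℕ) : ℂ) = (m : ℂ) / d₂ := by
        rw [eq_div_iff hd₂C]; exact hmd2
      rw [hw]
      simp only [Int.cast_natCast]
      rw [hdiv]
      field_simp
    have hzm : Complex.exp w ^ m = 1 := by
      rw [← Complex.exp_nat_mul]
      have e1 : (m : ℂ) * (2 * Real.pi * Complex.I * i / d₁)
          = ((i : ℂ) * ((m / d₁ : ℕ) : ℂ)) * (2 * Real.pi * Complex.I) := by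
        rw [← hmd1]
        field_simp
      have e2 : (m : ℂ) * (2 * Real.pi * Complex.I / d₂)
          = ((m / d₂ : ℕ) : ℂ) * (2 * Real.pi * Complex.I) := by
        rw [← hmd2]
        field_simp
      have heq : (m : ℂ) * w = (((i * (m / d₁) + (m / d₂) : ℕ) : ℤ) : ℂ) * (2 * Real.pi * Complex.I) := by
        rw [hw, mul_add, e1, e2, ← add_mul]
        norm_cast
      rw [heq, Complex.exp_int_mul_two_pi_mul_I]
    have hz1 : Complex.exp w = 1 ↔ (d₂ = d₁ ∧ d₁ ∣ i + 1) := by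
      rw [Complex.exp_eq_one_iff]
      constructor
      · rintro ⟨n, hn⟩
        rw [hw] at hn
        field_simp at hn
        have h3 : (2 * Real.pi * Complex.I) * (((i * d₂ + d₁ : ℕ) : ℂ))
            = (2 * Real.pi * Complex.I) * (((d₁ * d₂ : ℕ) : ℂ) * n) := by
          push_cast
          linear_combination (2 * Real.pi * Complex.I) * hn
        have h4 : ((i * d₂ + d₁ : ℕ) : ℂ) = ((d₁ * d₂ : ℕ) : ℂ) * (n : ℂ) := mul_left_cancel₀ hpi h3
        have h5 : ((i * d₂ + d₁ : ℕ) : ℤ) = ((d₁ * d₂ : ℕ) : ℤ) * n := by exact_mod_cast h4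
        have h6 : (d₁ * d₂ : ℕ) ∣ (i * d₂ + d₁ : ℕ) := Int.natCast_dvd_natCast.mp ⟨n, h5⟩
        exact (nt_iff d₁ d₂ i hd₁0 hicop).mp h6
      · intro hcond
        obtain ⟨n, hn⟩ := (nt_iff d₁ d₂ i hd₁0 hicop).mpr hcond
        refine ⟨(n : ℤ), ?_⟩
        have hcast : (i : ℂ) * d₂ + d₁ = (d₁ : ℂ) * d₂ * n := by exact_mod_cast hn
        rw [hw]
        field_simp
        linear_combination hcast
    calc (∑ k ∈ Finset.Icc 1 m,
        Complex.exp (2 * Real.pi * Complex.I * i * (k : ℤ) / d₁)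
          * Complex.exp (2 * Real.pi * Complex.I * k * ((m / d₂ : ℕ) : ℤ) / m))
        = ∑ k ∈ Finset.Icc 1 m, Complex.exp w ^ k := Finset.sum_congr rfl fun k _ => hterm k
      _ = if Complex.exp w = 1 then (m : ℂ) else 0 := geom_icc m _ hzm
      _ = if (d₂ = d₁ ∧ d₁ ∣ i + 1) then (m : ℂ) else 0 := by rw [if_congr hz1 rfl rfl]
  rw [Finset.sum_congr rfl inner]
  by_cases hEq : d₁ = d₂
  · rw [if_pos hEq]
    subst hEq
    simp only [eq_self_iff_true, true_and]
    exact count_one d₁ (by omega) (m : ℂ)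
  · rw [if_neg hEq]
    refine Finset.sum_eq_zero fun i _ => ?_
    rw [if_neg]
    rintro ⟨h, -⟩
    exact hEq h.symm
end

section
/- Let $b$ be an integer, $m \ge 1$, and let $t_1, \dots, t_n$ be positive divisors of $m$. The number of solutions $(x_1, \dots, x_n) \in (\mathbb{Z}/m\mathbb{Z})^n$ of $x_1 + \cdots + x_n \equiv b \pmod{m}$ with $\gcd(x_i, m) = t_i$ for all $i$ equals $\frac{1}{m} \sum_{d \mid m} C_d(b) \prod_{i=1}^n C_{m/t_i}(m/d)$. -/
open Finset


noncomputable def e (m : ℕ) (a : ℤ) : ℂ := Complex.exp (2 * Real.pi * Complex.I * a / m)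


lemma e_add (m : ℕ) (a b : ℤ) : e m (a + b) = e m a * e m b := by
  rw [e, e, e, ← Complex.exp_add]; congr 1; push_cast; ring

lemma e_mul_self (m : ℕ) (hm : m ≠ 0) (c : ℤ) : e m ((m : ℤ) * c) = 1 := by
  rw [e]
  have h : 2 * (Real.pi:ℂ) * Complex.I * (((m:ℤ):ℂ) * c) / m = c * (2 * Real.pi * Complex.I) := by
    have : (m:ℂ) ≠ 0 := Nat.cast_ne_zero.mpr hm
    field_simp; push_cast; ring
  rw [show (((m:ℤ) * c : ℤ) : ℂ) = ((m:ℤ):ℂ) * (c:ℂ) by push_cast; ring, h,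
    Complex.exp_int_mul_two_pi_mul_I]

lemma e_congr (m : ℕ) (hm : m ≠ 0) {a b : ℤ} (h : (m:ℤ) ∣ (a - b)) : e m a = e m b := by
  obtain ⟨c, hc⟩ := h
  have : a = b + m * c := by linarith
  rw [this, e_add, e_mul_self m hm, mul_one]

lemma e_ne_one (m : ℕ) (hm : m ≠ 0) {a : ℤ} (h : ¬ (m:ℤ) ∣ a) : e m a ≠ 1 := by
  intro h1
  rw [e, Complex.exp_eq_one_iff] at h1
  obtain ⟨k, hk⟩ := h1
  apply h
  refine ⟨k, ?_⟩
  have hm' : (m:ℂ) ≠ 0 := Nat.cast_ne_zero.mpr hm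
  have h2 : (2*(Real.pi:ℂ)*Complex.I) ≠ 0 := by
    simp [Real.pi_ne_zero, Complex.I_ne_zero]
  have key : (a:ℂ) = (m:ℂ) * k := by
    field_simp at hk
    apply mul_left_cancel₀ h2
    linear_combination (2*(Real.pi:ℂ)*Complex.I) * hk
  exact_mod_cast key

lemma e_pow (m : ℕ) (a : ℤ) (k : ℕ) : e m (k * a) = (e m a) ^ k := by
  induction k with
  | zero => simp [e]
  | succ k ih =>
    push_cast
    rw [add_mul, one_mul, e_add, ih, pow_succ]

lemma e_orth (m : ℕ) (hm : m ≠ 0) (a : ℤ) :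
    ∑ k ∈ range m, e m (k * a) = if (m:ℤ) ∣ a then (m:ℂ) else 0 := by
  split_ifs with h
  · rw [Finset.sum_congr rfl (fun k _ => ?_), Finset.sum_const, card_range, nsmul_eq_mul, mul_one]
    obtain ⟨c, hc⟩ := h
    rw [hc, show (k:ℤ) * ((m:ℤ)*c) = (m:ℤ)*(k*c) by ring, e_mul_self m hm]
  · have hne : e m a ≠ 1 := e_ne_one m hm h
    have : ∑ k ∈ range m, e m (k * a) = ∑ k ∈ range m, (e m a) ^ k := by
      refine Finset.sum_congr rfl fun k _ => ?_
      exact_mod_cast e_pow m a k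
    rw [this, geom_sum_eq hne]
    have : e m a ^ m = 1 := by
      rw [← e_pow, show ((m:ℕ):ℤ) * a = (m:ℤ) * a from rfl, e_mul_self m hm]
    rw [this, sub_self, zero_div]

lemma e_dvd (m t : ℕ) (hm : m ≠ 0) (htd : t ∣ m) (a : ℤ) : e m (t * a) = e (m/t) a := by
  have ht : t ≠ 0 := by rintro rfl; simp_all [zero_dvd_iff]
  have h1 : (m : ℂ) = (t : ℂ) * ((m/t : ℕ) : ℂ) := by
    rw [← Nat.cast_mul, Nat.mul_div_cancel' htd]
  have h2 : ((m/t : ℕ) : ℂ) ≠ 0 := by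
    have := Nat.div_pos (Nat.le_of_dvd (Nat.pos_of_ne_zero hm) htd) (Nat.pos_of_ne_zero ht)
    exact Nat.cast_ne_zero.mpr (Nat.pos_iff_ne_zero.mp this)
  rw [e, e]
  congr 1
  rw [h1]
  have ht' : (t:ℂ) ≠ 0 := Nat.cast_ne_zero.mpr ht
  push_cast
  field_simp

lemma rs_eq (q : ℕ) (a : ℤ) :
    ramanujanSum q a = ∑ j ∈ (Finset.Icc 1 q).filter (fun j => Nat.gcd j q = 1), e q (j * a) := by
  refine Finset.sum_congr rfl fun j _ => ?_
  rw [e]; congr 1; push_cast; ring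

lemma emod_sub (q j : ℕ) : (q:ℤ) ∣ ((j : ℤ) - ((j % q : ℕ) : ℤ)) := by
  refine ⟨(j / q : ℕ), ?_⟩
  have h2 : (j:ℤ) = ((j % q : ℕ) : ℤ) + (q:ℤ) * ((j / q : ℕ) : ℤ) := by
    exact_mod_cast (Nat.mod_add_div j q).symm
  linear_combination h2

lemma rs_units (q : ℕ) [NeZero q] (a : ℤ) :
    ramanujanSum q a = ∑ v : (ZMod q)ˣ, e q ((((v : ZMod q).val : ℕ) : ℤ) * a) := by
  rw [rs_eq]
  have hq : 0 < q := Nat.pos_of_ne_zero (NeZero.ne q)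
  refine Finset.sum_nbij' (fun j => if h : Nat.gcd j q = 1 then ZMod.unitOfCoprime j h else 1)
    (fun v => if (v : ZMod q).val = 0 then q else (v : ZMod q).val) ?_ ?_ ?_ ?_ ?_
  · intro j hj; exact mem_univ _
  · intro v _
    simp only [mem_filter, mem_Icc]
    have hcop : Nat.Coprime ((v : ZMod q).val) q := ZMod.val_coe_unit_coprime v
    by_cases h0 : (v : ZMod q).val = 0
    · have hq1 : q = 1 := by
        have : Nat.gcd 0 q = 1 := by rw [← h0]; exact hcop
        simpa using this
      simp [h0, hq1]
    · have hlt : (v : ZMod q).val < q := ZMod.val_lt _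
      simp only [h0, if_neg, if_false]
      exact ⟨⟨Nat.pos_of_ne_zero h0, le_of_lt hlt⟩, hcop⟩
  · -- left inverse
    intro j hj
    simp only [mem_filter, mem_Icc] at hj
    obtain ⟨⟨hj1, hjq⟩, hg⟩ := hj
    rw [dif_pos hg]
    have hval : ((ZMod.unitOfCoprime j hg : (ZMod q)ˣ) : ZMod q).val = j % q := by
      simp [ZMod.unitOfCoprime, ZMod.val_natCast]
    rw [hval]
    split_ifs with h
    · exact le_antisymm (Nat.le_of_dvd hj1 (Nat.dvd_of_mod_eq_zero h)) hjq
    · have hne : j ≠ q := fun hh => h (by rw [hh]; exact Nat.mod_self q)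
      exact Nat.mod_eq_of_lt (lt_of_le_of_ne hjq hne)
  · -- right inverse
    intro v _
    have hcop : Nat.Coprime ((v : ZMod q).val) q := ZMod.val_coe_unit_coprime v
    by_cases h0 : (v : ZMod q).val = 0
    · have hq1 : q = 1 := by
        have : Nat.gcd 0 q = 1 := by rw [← h0]; exact hcop
        simpa using this
      subst hq1
      rw [if_pos h0]
      apply Subsingleton.elim
    · rw [if_neg h0, dif_pos hcop]
      ext
      simp [ZMod.unitOfCoprime, ZMod.natCast_val, ZMod.cast_id]
  · -- value equality
    intro j hj
    simp only [mem_filter, mem_Icc] at hj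
    rw [dif_pos hj.2]
    refine (e_congr q (NeZero.ne q) ?_).symm
    have hval : ((ZMod.unitOfCoprime j hj.2 : (ZMod q)ˣ) : ZMod q).val = j % q := by
      simp [ZMod.unitOfCoprime, ZMod.val_natCast]
    rw [hval]
    have := emod_sub q j
    obtain ⟨c, hc⟩ := this
    exact ⟨-(c * a), by push_cast at hc ⊢; linear_combination (-a) * hc⟩

lemma rs_shift (q r : ℕ) [NeZero q] (hrq : r ∣ q) (u : ℕ) (hu : Nat.Coprime u r) (c : ℤ) :
    ∑ v : (ZMod q)ˣ, e r ((((v : ZMod q).val : ℕ) : ℤ) * ((u : ℤ) * c)) =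
    ∑ v : (ZMod q)ˣ, e r ((((v : ZMod q).val : ℕ) : ℤ) * c) := by
  have hr : r ≠ 0 := fun h => by subst h; exact NeZero.ne q (Nat.eq_zero_of_zero_dvd hrq)
  haveI : NeZero r := ⟨hr⟩
  obtain ⟨w, hw⟩ := ZMod.unitsMap_surjective hrq (ZMod.unitOfCoprime u hu)
  refine Fintype.sum_equiv (Equiv.mulLeft w) _ _ fun v => ?_
  apply e_congr r hr
  have hcast : ((((w : ZMod q) * (v : ZMod q)).val : ℕ) : ZMod r) =
      (u : ZMod r) * ((((v : ZMod q).val : ℕ)) : ZMod r) := by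
    rw [ZMod.natCast_val, ZMod.natCast_val]
    have h1 : (ZMod.cast ((w : ZMod q)) : ZMod r) = (u : ZMod r) := by
      have := congrArg (fun x : (ZMod r)ˣ => (x : ZMod r)) hw
      simpa [ZMod.unitsMap, ZMod.castHom_apply] using this
    rw [ZMod.cast_mul hrq, h1]
  have hdvd : (r : ℤ) ∣ ((((v : ZMod q).val : ℕ) : ℤ) * (u : ℤ) -
      ((((w : ZMod q) * (v : ZMod q)).val : ℕ) : ℤ)) := by
    rw [← ZMod.intCast_zmod_eq_zero_iff_dvd]
    push_cast
    rw [hcast]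
    push_cast
    ring
  obtain ⟨k, hk⟩ := hdvd
  exact ⟨k * c, by dsimp only [Equiv.coe_mulLeft]; linear_combination c * hk⟩

lemma rs_neg (d : ℕ) [NeZero d] (b : ℤ) : ramanujanSum d (-b) = ramanujanSum d b := by
  rw [rs_units, rs_units]
  refine Fintype.sum_equiv (Equiv.neg _) _ _ fun v => ?_
  apply e_congr d (NeZero.ne d)
  have hsum : (d : ℤ) ∣ ((((-v : (ZMod d)ˣ) : ZMod d).val : ℤ) + (((v : ZMod d)).val : ℤ)) := by
    rw [← ZMod.intCast_zmod_eq_zero_iff_dvd]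
    push_cast
    rw [ZMod.natCast_val, ZMod.natCast_val]
    simp [ZMod.cast_id']
  obtain ⟨k, hk⟩ := hsum
  refine ⟨-k * b, ?_⟩
  have : ((Equiv.neg (ZMod d)ˣ) v : ZMod d).val = (((-v : (ZMod d)ˣ) : ZMod d)).val := rfl
  rw [this]
  linear_combination (-b) * hk

lemma rs_mul_coprime (q d m : ℕ) (hm : m ≠ 0) (hd : d ∣ m) (hq : q ∣ m) (u : ℕ)
    (hu : Nat.Coprime u d) :
    ramanujanSum q (((m/d : ℕ) : ℤ) * (u : ℤ)) = ramanujanSum q (((m/d : ℕ) : ℤ)) := by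
  haveI : NeZero q := ⟨fun h => hm (Nat.eq_zero_of_zero_dvd (h ▸ hq))⟩
  set k := m / d with hkdef
  have hkm : k ∣ m := Nat.div_dvd_of_dvd hd
  have hk0 : k ≠ 0 := by
    have : 0 < k := Nat.div_pos (Nat.le_of_dvd (Nat.pos_of_ne_zero hm) hd)
      (Nat.pos_of_ne_zero (fun h => hm (Nat.eq_zero_of_zero_dvd (h ▸ hd))))
    omega
  set g := Nat.gcd k q with hgdef
  have hgk : g ∣ k := Nat.gcd_dvd_left k q
  have hgq : g ∣ q := Nat.gcd_dvd_right k q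
  have hg0 : g ≠ 0 := fun h => hk0 (Nat.eq_zero_of_gcd_eq_zero_left h)
  set s := k / g with hsdef
  set r := q / g with hrdef
  have hks : k = g * s := (Nat.mul_div_cancel' hgk).symm
  have hqr : q = g * r := (Nat.mul_div_cancel' hgq).symm
  -- r ∣ d
  have hlcm : Nat.lcm k q ∣ m := Nat.lcm_dvd hkm hq
  have hkr : k * r = Nat.lcm k q := by
    have h1 : g * Nat.lcm k q = k * q := Nat.gcd_mul_lcm k q
    have h2 : g * (k * r) = k * q := by rw [hqr]; ring
    exact Nat.eq_of_mul_eq_mul_left (Nat.pos_of_ne_zero hg0) (h2.trans h1.symm)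
  have hrd : r ∣ d := by
    have hmd : m = k * d := (Nat.div_mul_cancel hd).symm
    have : k * r ∣ k * d := by rw [hkr, ← hmd]; exact hlcm
    exact (Nat.mul_dvd_mul_iff_left (Nat.pos_of_ne_zero hk0)).mp this
  have hur : Nat.Coprime u r := Nat.Coprime.coprime_dvd_right hrd hu
  have hrq : r ∣ q := ⟨g, by rw [hqr]; ring⟩
  rw [rs_units, rs_units]
  have step1 : ∀ v : (ZMod q)ˣ, e q ((((v : ZMod q).val : ℕ) : ℤ) * ((k : ℤ) * (u:ℤ)))
      = e r ((((v : ZMod q).val : ℕ) : ℤ) * ((u:ℤ) * (s:ℤ))) := by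
    intro v
    have := e_dvd q g (NeZero.ne q) hgq ((((v : ZMod q).val : ℕ) : ℤ) * ((u:ℤ) * (s:ℤ)))
    rw [show q / g = r from rfl] at this
    rw [← this]
    congr 1
    rw [show (k:ℤ) = (g:ℤ) * (s:ℤ) by exact_mod_cast congrArg (Nat.cast : ℕ → ℤ) hks]
    ring
  have step2 : ∀ v : (ZMod q)ˣ, e q ((((v : ZMod q).val : ℕ) : ℤ) * (k : ℤ))
      = e r ((((v : ZMod q).val : ℕ) : ℤ) * (s:ℤ)) := by
    intro v
    have := e_dvd q g (NeZero.ne q) hgq ((((v : ZMod q).val : ℕ) : ℤ) * (s:ℤ))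
    rw [show q / g = r from rfl] at this
    rw [← this]
    congr 1
    rw [show (k:ℤ) = (g:ℤ) * (s:ℤ) by exact_mod_cast congrArg (Nat.cast : ℕ → ℤ) hks]
    ring
  calc ∑ v : (ZMod q)ˣ, e q ((((v : ZMod q).val : ℕ) : ℤ) * ((k : ℤ) * (u:ℤ)))
      = ∑ v : (ZMod q)ˣ, e r ((((v : ZMod q).val : ℕ) : ℤ) * ((u:ℤ) * (s:ℤ))) :=
        Finset.sum_congr rfl fun v _ => step1 v
    _ = ∑ v : (ZMod q)ˣ, e r ((((v : ZMod q).val : ℕ) : ℤ) * (s:ℤ)) :=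
        rs_shift q r hrq u hur (s:ℤ)
    _ = ∑ v : (ZMod q)ˣ, e q ((((v : ZMod q).val : ℕ) : ℤ) * (k : ℤ)) :=
        (Finset.sum_congr rfl fun v _ => step2 v).symm

lemma coord_sum (m t : ℕ) [NeZero m] (htm : t ∣ m) (htpos : 0 < t) (a : ℤ) :
    ∑ y ∈ Finset.univ.filter (fun y : ZMod m => Nat.gcd (y.val) m = t),
      e m (((y.val : ℕ) : ℤ) * a) = ramanujanSum (m/t) a := by
  have hm : m ≠ 0 := NeZero.ne m
  have hm' : 0 < m := Nat.pos_of_ne_zero hm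
  rw [rs_eq]
  have hmt : m = t * (m / t) := (Nat.mul_div_cancel' htm).symm
  refine Finset.sum_nbij' (fun y => (if (y : ZMod m).val = 0 then m else (y:ZMod m).val) / t)
    (fun j => ((t * j : ℕ) : ZMod m)) ?_ ?_ ?_ ?_ ?_
  · intro y hy
    simp only [mem_filter, mem_univ, true_and] at hy
    set v := (if (y : ZMod m).val = 0 then m else (y:ZMod m).val) with hv
    have hgv : Nat.gcd v m = t := by
      rw [hv]; split_ifs with h0
      · rw [← hy, h0, Nat.gcd_self, Nat.gcd_comm]
        simp
      · exact hy
    have htv : t ∣ v := hgv ▸ Nat.gcd_dvd_left v m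
    have hv1 : 1 ≤ v := by
      rw [hv]; split_ifs with h0
      · exact hm'
      · exact Nat.pos_of_ne_zero h0
    have hvm : v ≤ m := by
      rw [hv]; split_ifs with h0
      · exact le_refl m
      · exact le_of_lt (ZMod.val_lt _)
    simp only [mem_filter, mem_Icc]
    refine ⟨⟨Nat.one_le_div_iff htpos |>.mpr (Nat.le_of_dvd hv1 htv), Nat.div_le_div_right hvm⟩, ?_⟩
    have hveq : v = t * (v / t) := (Nat.mul_div_cancel' htv).symm
    have : t * Nat.gcd (v/t) (m/t) = t * 1 := by
      rw [← Nat.gcd_mul_left, ← hveq, ← hmt, hgv, mul_one]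
    exact Nat.eq_of_mul_eq_mul_left htpos this
  · intro j hj
    simp only [mem_filter, mem_Icc] at hj
    obtain ⟨⟨hj1, hj2⟩, hg⟩ := hj
    simp only [mem_filter, mem_univ, true_and]
    rw [ZMod.val_natCast, ← Nat.gcd_rec m (t*j), Nat.gcd_comm]
    conv_lhs => rw [hmt]
    rw [Nat.gcd_mul_left, hg, mul_one]
  · -- left inverse: y → j → y
    intro y hy
    simp only [mem_filter, mem_univ, true_and] at hy
    set v := (if (y : ZMod m).val = 0 then m else (y:ZMod m).val) with hv
    have hgv : Nat.gcd v m = t := by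
      rw [hv]; split_ifs with h0
      · rw [← hy, h0, Nat.gcd_self, Nat.gcd_comm]; simp
      · exact hy
    have htv : t ∣ v := hgv ▸ Nat.gcd_dvd_left v m
    rw [Nat.mul_div_cancel' htv]
    rw [hv]
    split_ifs with h0
    · rw [ZMod.natCast_self]
      exact ((ZMod.val_eq_zero y).mp h0).symm
    · exact ZMod.natCast_rightInverse y
  · -- right inverse: j → y → j
    intro j hj
    simp only [mem_filter, mem_Icc] at hj
    obtain ⟨⟨hj1, hj2⟩, hg⟩ := hj
    have htj : t * j ≤ m := by calc t * j ≤ t * (m/t) := Nat.mul_le_mul_left t hj2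
                                   _ = m := (Nat.mul_div_cancel' htm)
    rw [ZMod.val_natCast]
    by_cases hcase : t * j = m
    · have h0 : t * j % m = 0 := by rw [hcase, Nat.mod_self]
      rw [h0, if_pos rfl]
      have : j = m / t := by
        have := hcase
        rw [hmt] at this
        exact Nat.eq_of_mul_eq_mul_left htpos this
      rw [this]
    · have hlt : t * j < m := lt_of_le_of_ne htj hcase
      rw [Nat.mod_eq_of_lt hlt, if_neg (Nat.pos_iff_ne_zero.mp (Nat.mul_pos htpos hj1)),
        Nat.mul_div_cancel_left j htpos]
  · -- values
    intro y hy
    simp only [mem_filter, mem_univ, true_and] at hy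
    set v := (if (y : ZMod m).val = 0 then m else (y:ZMod m).val) with hv
    have hgv : Nat.gcd v m = t := by
      rw [hv]; split_ifs with h0
      · rw [← hy, h0, Nat.gcd_self, Nat.gcd_comm]; simp
      · exact hy
    have htv : t ∣ v := hgv ▸ Nat.gcd_dvd_left v m
    have h1 : e (m/t) (((v/t : ℕ):ℤ) * a) = e m ((v:ℤ) * a) := by
      rw [← e_dvd m t hm htm]
      congr 1
      have hc : (t:ℤ) * ((v/t : ℕ):ℤ) = (v:ℤ) := by
        exact_mod_cast congrArg (Nat.cast : ℕ → ℤ) (Nat.mul_div_cancel' htv)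
      linear_combination a * hc
    have h2 : e m (((y.val : ℕ):ℤ)*a) = e m ((v:ℤ)*a) := by
      apply e_congr m hm
      rw [hv]
      split_ifs with h0
      · exact ⟨-a, by rw [h0]; push_cast; ring⟩
      · exact ⟨0, by ring⟩
    exact h2.trans h1.symm

lemma e_sum {ι : Type*} (m : ℕ) (s : Finset ι) (f : ι → ℤ) :
    e m (∑ i ∈ s, f i) = ∏ i ∈ s, e m (f i) := by
  classical
  induction s using Finset.cons_induction with
  | empty => simp [e]
  | cons a s ha ih => rw [Finset.sum_cons, Finset.prod_cons, e_add, ih]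

lemma count_formula (n m : ℕ) [NeZero m] (b : ℤ) (t : Fin n → ℕ) (ht : ∀ i, t i ∣ m)
    (htpos : ∀ i, 0 < t i) :
    ((Finset.univ.filter
        (fun x : Fin n → ZMod m =>
          (∑ j, x j = (b : ZMod m)) ∧ ∀ j, Nat.gcd (x j).val m = t j)).card : ℂ) * m =
    ∑ k ∈ range m, e m (-((k:ℤ) * b)) * ∏ j, ramanujanSum (m / t j) (k : ℤ) := by
  classical
  have hm : m ≠ 0 := NeZero.ne m
  set A := Finset.univ.filter (fun x : Fin n → ZMod m => ∀ j, Nat.gcd (x j).val m = t j) with hA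
  -- right side inner transformation
  have key : ∀ k ∈ range m,
      e m (-((k:ℤ) * b)) * ∏ j, ramanujanSum (m / t j) (k : ℤ)
      = ∑ x ∈ A, e m ((k:ℤ) * ((∑ j, (((x j).val : ℕ) : ℤ)) - b)) := by
    intro k _
    have h1 : ∀ j : Fin n, ramanujanSum (m / t j) (k : ℤ) =
        ∑ y ∈ Finset.univ.filter (fun y : ZMod m => Nat.gcd (y.val) m = t j),
          e m (((y.val : ℕ) : ℤ) * k) := fun j => (coord_sum m (t j) (ht j) (htpos j) k).symm
    rw [Finset.prod_congr rfl (fun j _ => h1 j), Finset.prod_univ_sum]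
    have hAeq : A = Fintype.piFinset
        (fun j => Finset.univ.filter (fun y : ZMod m => Nat.gcd (y.val) m = t j)) := by
      ext x
      simp [hA, Fintype.mem_piFinset]
    rw [← hAeq, Finset.mul_sum]
    refine Finset.sum_congr rfl fun x hx => ?_
    rw [← e_sum m Finset.univ (fun j => (((x j).val : ℕ) : ℤ) * k), ← e_add]
    congr 1
    rw [← Finset.sum_mul]
    ring
  rw [Finset.sum_congr rfl key, Finset.sum_comm]
  -- now inner sum over k is orthogonality
  have inner : ∀ x : Fin n → ZMod m,
      ∑ k ∈ range m, e m ((k:ℤ) * ((∑ j, (((x j).val : ℕ) : ℤ)) - b))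
      = if (∑ j, x j = (b : ZMod m)) then (m:ℂ) else 0 := by
    intro x
    rw [e_orth m hm]
    congr 1
    rw [eq_iff_iff]
    rw [← ZMod.intCast_zmod_eq_zero_iff_dvd]
    constructor
    · intro h
      have : ((∑ j, (((x j).val : ℕ) : ℤ) : ℤ) : ZMod m) = ((b : ℤ) : ZMod m) := by
        push_cast at h ⊢
        linear_combination h
      rw [← this]
      push_cast
      refine Finset.sum_congr rfl fun j _ => ?_
      rw [ZMod.natCast_val, ZMod.cast_id]
    · intro h
      have : ((∑ j, (((x j).val : ℕ) : ℤ) : ℤ) : ZMod m) = ((b : ℤ) : ZMod m) := by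
        rw [← h]
        push_cast
        refine Finset.sum_congr rfl fun j _ => ?_
        rw [ZMod.natCast_val, ZMod.cast_id]
      push_cast at this ⊢
      linear_combination this
  rw [Finset.sum_congr rfl (fun x _ => inner x)]
  rw [Finset.sum_ite, Finset.sum_const, Finset.sum_const, smul_zero, add_zero, nsmul_eq_mul]
  congr 2
  rw [hA, Finset.filter_filter]
  congr 1
  ext x
  simp only [mem_filter, mem_univ, true_and]
  exact and_comm

lemma range_to_divisors (m : ℕ) [NeZero m] (F : ℕ → ℂ) (hF : F m = F 0) :
    ∑ k ∈ range m, F k =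
      ∑ d ∈ m.divisors, ∑ u ∈ (Icc 1 d).filter (fun u => Nat.gcd u d = 1), F ((m/d)*u) := by
  have hm : m ≠ 0 := NeZero.ne m
  have hm' : 0 < m := Nat.pos_of_ne_zero hm
  have h1 : range m = insert 0 (Ico 1 m) := by ext k; simp; omega
  have h2 : Icc 1 m = insert m (Ico 1 m) := by ext k; simp; omega
  have hstep : ∑ k ∈ range m, F k = ∑ k ∈ Icc 1 m, F k := by
    rw [h1, h2, Finset.sum_insert (by simp), Finset.sum_insert (by simp), hF]
  rw [hstep, Finset.sum_sigma']
  refine (Finset.sum_nbij' (fun k => (⟨m / Nat.gcd k m, k / Nat.gcd k m⟩ : Σ _ : ℕ, ℕ))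
    (fun p => (m/p.1) * p.2) ?_ ?_ ?_ ?_ ?_).symm.symm
  · -- forward membership
    intro k hk
    simp only [mem_Icc] at hk
    have hg : Nat.gcd k m ∣ m := Nat.gcd_dvd_right k m
    have hg0 : 0 < Nat.gcd k m := Nat.gcd_pos_of_pos_right k hm'
    simp only [Finset.mem_sigma, Nat.mem_divisors, mem_filter, mem_Icc]
    refine ⟨⟨Nat.div_dvd_of_dvd hg, hm⟩, ⟨?_, ?_⟩, ?_⟩
    · exact Nat.one_le_div_iff hg0 |>.mpr (Nat.le_of_dvd (by omega) (Nat.gcd_dvd_left k m))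
    · exact Nat.div_le_div_right hk.2
    · exact Nat.coprime_div_gcd_div_gcd hg0
  · -- backward membership
    rintro ⟨d, u⟩ hp
    simp only [Finset.mem_sigma, Nat.mem_divisors, mem_filter, mem_Icc] at hp
    obtain ⟨⟨hd, _⟩, ⟨hu1, hu2⟩, hcop⟩ := hp
    simp only [mem_Icc]
    constructor
    · have h1 : 0 < m / d := Nat.div_pos (Nat.le_of_dvd hm' hd)
        (Nat.pos_of_ne_zero (fun h => hm (Nat.eq_zero_of_zero_dvd (h ▸ hd))))
      exact Nat.one_le_iff_ne_zero.mpr (Nat.pos_iff_ne_zero.mp (Nat.mul_pos h1 hu1))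
    · calc (m/d) * u ≤ (m/d) * d := Nat.mul_le_mul_left _ hu2
        _ = m := Nat.div_mul_cancel hd
  · -- left inverse
    intro k hk
    simp only [mem_Icc] at hk
    have hg : Nat.gcd k m ∣ k := Nat.gcd_dvd_left k m
    have hgm : Nat.gcd k m ∣ m := Nat.gcd_dvd_right k m
    have hg0 : 0 < Nat.gcd k m := Nat.gcd_pos_of_pos_right k hm'
    dsimp only
    rw [Nat.div_div_self hgm hm, Nat.mul_div_cancel' hg]
  · -- right inverse
    rintro ⟨d, u⟩ hp
    simp only [Finset.mem_sigma, Nat.mem_divisors, mem_filter, mem_Icc] at hp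
    obtain ⟨⟨hd, _⟩, ⟨hu1, hu2⟩, hcop⟩ := hp
    have hd0 : d ≠ 0 := fun h => hm (Nat.eq_zero_of_zero_dvd (h ▸ hd))
    have hmd0 : 0 < m / d := Nat.div_pos (Nat.le_of_dvd hm' hd) (Nat.pos_of_ne_zero hd0)
    have hgcd : Nat.gcd ((m/d)*u) m = m/d := by
      have h' : Nat.gcd ((m/d)*u) ((m/d)*d) = (m/d) := by
        rw [Nat.gcd_mul_left, hcop, mul_one]
      rw [Nat.div_mul_cancel hd] at h'
      exact h'
    dsimp only
    rw [hgcd]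
    have hmm : m / (m/d) = d := Nat.div_div_self hd hm
    ext
    · simp [hmm]
    · simp [Nat.mul_div_cancel_left u hmd0, hmm]
  · intro k hk
    simp only [mem_Icc] at hk
    have hg : Nat.gcd k m ∣ k := Nat.gcd_dvd_left k m
    have hgm : Nat.gcd k m ∣ m := Nat.gcd_dvd_right k m
    dsimp only
    rw [Nat.div_div_self hgm hm, Nat.mul_div_cancel' hg]

lemma rs_congr (q : ℕ) (hq : q ≠ 0) {a b : ℤ} (h : (q:ℤ) ∣ (a - b)) :
    ramanujanSum q a = ramanujanSum q b := by
  rw [rs_eq, rs_eq]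
  refine Finset.sum_congr rfl fun j _ => ?_
  apply e_congr q hq
  obtain ⟨c, hc⟩ := h
  exact ⟨j * c, by push_cast; linear_combination (j:ℤ) * hc⟩

lemma inner_eval (n m d : ℕ) [NeZero m] (hd : d ∣ m) (hd0 : d ≠ 0) (b : ℤ) (t : Fin n → ℕ)
    (ht : ∀ i, t i ∣ m) :
    ∑ u ∈ (Icc 1 d).filter (fun u => Nat.gcd u d = 1),
      (e m (-((((m/d)*u : ℕ):ℤ) * b)) * ∏ j, ramanujanSum (m / t j) ((((m/d)*u : ℕ)):ℤ))
    = ramanujanSum d b * ∏ i, ramanujanSum (m / t i) ((m / d : ℕ) : ℤ) := by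
  have hm : m ≠ 0 := NeZero.ne m
  haveI : NeZero d := ⟨hd0⟩
  have hmd : (m/d) ∣ m := Nat.div_dvd_of_dvd hd
  have hdd : m / (m/d) = d := Nat.div_div_self hd hm
  have step : ∀ u ∈ (Icc 1 d).filter (fun u => Nat.gcd u d = 1),
      e m (-((((m/d)*u : ℕ):ℤ) * b)) * ∏ j, ramanujanSum (m / t j) ((((m/d)*u : ℕ)):ℤ)
      = e d ((u:ℤ) * (-b)) * ∏ i, ramanujanSum (m / t i) ((m / d : ℕ) : ℤ) := by
    intro u hu
    simp only [mem_filter, mem_Icc] at hu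
    congr 1
    · have h1 := e_dvd m (m/d) hm hmd ((u:ℤ)*(-b))
      rw [hdd] at h1
      rw [← h1]
      congr 1
      push_cast
      ring
    · refine Finset.prod_congr rfl fun j _ => ?_
      have h2 := rs_mul_coprime (m / t j) d m hm hd (Nat.div_dvd_of_dvd (ht j)) u hu.2
      rw [show ((((m/d)*u : ℕ)):ℤ) = ((m/d : ℕ) : ℤ) * (u:ℤ) by push_cast; ring]
      exact h2
  rw [Finset.sum_congr rfl step, ← Finset.sum_mul]
  congr 1
  rw [← rs_neg d b, rs_eq]

theorem restricted_congruence_count (n m : ℕ) [NeZero m] (b : ℤ)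
    (t : Fin n → ℕ) (ht : ∀ i, t i ∣ m) (htpos : ∀ i, 0 < t i) :
    ((Finset.univ.filter
        (fun x : Fin n → ZMod m =>
          (∑ j, x j = (b : ZMod m)) ∧ ∀ j, Nat.gcd (x j).val m = t j)).card : ℂ) =
      (1 / (m : ℂ)) *
        ∑ d ∈ m.divisors,
          ramanujanSum d b * ∏ i, ramanujanSum (m / t i) ((m / d : ℕ) : ℤ) := by
  classical
  have hm : m ≠ 0 := NeZero.ne m
  have hmC : (m:ℂ) ≠ 0 := Nat.cast_ne_zero.mpr hm
  have h1 := count_formula n m b t ht htpos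
  have hF : e m (-(((m:ℕ):ℤ) * b)) * ∏ j, ramanujanSum (m / t j) (((m:ℕ)) : ℤ)
      = e m (-(((0:ℕ):ℤ) * b)) * ∏ j, ramanujanSum (m / t j) (((0:ℕ)) : ℤ) := by
    congr 1
    · apply e_congr m hm
      exact ⟨-b, by push_cast; ring⟩
    · refine Finset.prod_congr rfl fun j _ => ?_
      have hq : m / t j ≠ 0 := by
        have : 0 < m / t j := Nat.div_pos (Nat.le_of_dvd (Nat.pos_of_ne_zero hm) (ht j)) (htpos j)
        omega
      apply rs_congr _ hq
      refine ⟨(t j : ℤ), ?_⟩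
      push_cast
      rw [show ((m:ℤ) - 0) = (m:ℤ) by ring]
      exact_mod_cast congrArg (Nat.cast : ℕ → ℤ) (Nat.div_mul_cancel (ht j)).symm
  have h2 := range_to_divisors m
    (fun k => e m (-((k:ℤ) * b)) * ∏ j, ramanujanSum (m / t j) (k : ℤ)) hF
  rw [h2] at h1
  have h3 : ∀ d ∈ m.divisors,
      ∑ u ∈ (Icc 1 d).filter (fun u => Nat.gcd u d = 1),
        (fun k : ℕ => e m (-((k:ℤ) * b)) * ∏ j, ramanujanSum (m / t j) (k : ℤ)) ((m/d)*u)
      = ramanujanSum d b * ∏ i, ramanujanSum (m / t i) ((m / d : ℕ) : ℤ) := by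
    intro d hd
    simp only [Nat.mem_divisors] at hd
    exact inner_eval n m d hd.1 (fun h => hd.2 (Nat.eq_zero_of_zero_dvd (h ▸ hd.1))) b t ht
  rw [Finset.sum_congr rfl h3] at h1
  rw [← h1]
  field_simp
end

section
/- Let $a, b$ be integers, $m \ge 1$, and $t \ge 1$. The congruence $a x \equiv b \pmod{m}$ has a solution $x$ with $\gcd(x, m) = t$ if and only if $t \mid \gcd(b, m)$ and $\gcd(a, m/t) = \gcd(b/t, m/t)$. Moreover, if these conditions hold, the number of such solutions modulo $m$ is exactly $\varphi(m/t) / \varphi(m/(td))$ where $d = \gcd(a, m/t)$. -/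
open Finset

private lemma gcd_congr_dvd {x y : ℤ} {n : ℕ} (h : (n:ℤ) ∣ x - y) : Int.gcd x n ∣ Int.gcd y n := by
  have h1 : (Int.gcd x n : ℤ) ∣ y := by
    have hx : (Int.gcd x n : ℤ) ∣ x := Int.gcd_dvd_left _ _
    have hn : (Int.gcd x n : ℤ) ∣ (n : ℤ) := Int.gcd_dvd_right _ _
    have := dvd_sub hx (hn.trans h)
    simpa using this
  exact_mod_cast Int.dvd_coe_gcd h1 (Int.gcd_dvd_right _ _)

private lemma gcd_congr {x y : ℤ} {n : ℕ} (h : (n:ℤ) ∣ x - y) : Int.gcd x n = Int.gcd y n :=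
  Nat.dvd_antisymm (gcd_congr_dvd h) (gcd_congr_dvd (by simpa using h.neg_right))

private lemma gcd_mul_coprime {a : ℤ} {w n : ℕ} (h : Nat.gcd w n = 1) :
    Int.gcd (a * (w:ℤ)) n = Int.gcd a n := by
  unfold Int.gcd
  rw [Int.natAbs_mul]
  simpa using Nat.Coprime.gcd_mul_right_cancel a.natAbs (k := w) (by simpa [Nat.Coprime] using h)

private lemma sol_iff {n : ℕ} [NeZero n] (a c : ℤ) (y : ZMod n) :
    (a : ZMod n) * y = (c : ZMod n) ↔ (n:ℤ) ∣ a * (y.val : ℤ) - c := by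
  have hy : ((y.val : ℤ) : ZMod n) = y := by
    rw [Int.cast_natCast, ZMod.natCast_val, ZMod.cast_id]
  rw [← ZMod.intCast_zmod_eq_zero_iff_dvd, Int.cast_sub, Int.cast_mul, hy, sub_eq_zero]

private lemma cop_div {x : ℤ} {n d n1 : ℕ} (hd : Int.gcd x n = d) (hd0 : 0 < d)
    (hn : n = d * n1) : Int.gcd (x / d) n1 = 1 := by
  have hdz : (d:ℤ) ≠ 0 := by exact_mod_cast hd0.ne'
  have hdn : ((n:ℤ) / d) = (n1:ℤ) := by
    rw [hn]; push_cast; rw [Int.mul_ediv_cancel_left _ hdz]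
  have h1 := Int.gcd_div_gcd_div_gcd (i := x) (j := (n:ℤ)) (by rw [hd]; exact_mod_cast hd0)
  rwa [hd, hdn] at h1

private lemma dvd_mul_iff_key {a : ℤ} {n d n1 : ℕ} (hd : Int.gcd a n = d) (hd0 : 0 < d)
    (hn : n = d * n1) (w : ℤ) : (n:ℤ) ∣ a * w ↔ (n1:ℤ) ∣ w := by
  have hdz : (d:ℤ) ≠ 0 := by exact_mod_cast hd0.ne'
  have hda : (d:ℤ) ∣ a := by rw [← hd]; exact Int.gcd_dvd_left _ _
  have ha : (d:ℤ) * (a / d) = a := Int.mul_ediv_cancel' hda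
  have hn' : (n:ℤ) = (d:ℤ) * (n1:ℤ) := by rw [hn]; push_cast; ring
  have hco : IsCoprime ((n1:ℤ)) (a / d) := by
    rw [Int.isCoprime_iff_gcd_eq_one, Int.gcd_comm]
    exact cop_div hd hd0 hn
  constructor
  · intro h
    have h2 : (d:ℤ) * (n1:ℤ) ∣ (d:ℤ) * ((a/d) * w) := by
      rw [← mul_assoc, ha, ← hn']; exact h
    exact hco.dvd_of_dvd_mul_left ((mul_dvd_mul_iff_left hdz).mp h2)
  · intro h
    rw [hn']
    have h2 := mul_dvd_mul_left (d:ℤ) (h.mul_left (a/d))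
    rwa [← mul_assoc, ha] at h2

private lemma card_fiber_eq {G H : Type*} [Group G] [Fintype G] [Group H] [Fintype H]
    [DecidableEq G] [DecidableEq H]
    (f : G →* H) (hf : Function.Surjective f) (z : H) :
    (Finset.univ.filter (fun g => f g = z)).card = Fintype.card G / Fintype.card H := by
  classical
  obtain ⟨g0, hg0⟩ := hf z
  have hmem : ∀ g : G, f g = z ↔ g * g0⁻¹ ∈ f.ker := by
    intro g
    simp [MonoidHom.mem_ker, hg0.symm, mul_inv_eq_one, map_mul]
  have hcard1 : (Finset.univ.filter (fun g => f g = z)).card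
      = (Finset.univ.filter (fun g : G => g ∈ f.ker)).card := by
    apply Finset.card_nbij' (fun g => g * g0⁻¹) (fun g => g * g0)
    · intro g hg
      simp only [Finset.mem_coe, Finset.mem_filter, Finset.mem_univ, true_and] at hg ⊢
      exact (hmem g).mp hg
    · intro g hg
      simp only [Finset.mem_coe, Finset.mem_filter, Finset.mem_univ, true_and] at hg ⊢
      exact (hmem (g * g0)).mpr (by simpa using hg)
    · intro g _; simp
    · intro g _; simp
  rw [hcard1]
  have hker : (Finset.univ.filter (fun g : G => g ∈ f.ker)).card = Nat.card f.ker := by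
    rw [Nat.card_eq_fintype_card, Fintype.card_subtype]
  rw [hker]
  have hq : Nat.card G = Nat.card H * Nat.card f.ker := by
    have := Subgroup.card_eq_card_quotient_mul_card_subgroup f.ker
    rwa [Nat.card_congr (QuotientGroup.quotientKerEquivOfSurjective f hf).toEquiv] at this
  have hH : 0 < Nat.card H := Nat.card_pos
  have hG : Nat.card G = Fintype.card G := Nat.card_eq_fintype_card
  have hH' : Nat.card H = Fintype.card H := Nat.card_eq_fintype_card
  refine (Nat.div_eq_of_eq_mul_left ?_ ?_).symm
  · omega
  · rw [← hG, ← hH', hq, mul_comm]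

private lemma unit_level (n : ℕ) [NeZero n] (a c : ℤ) (h : Int.gcd a (n:ℤ) = Int.gcd c (n:ℤ)) :
    (∃ y : ZMod n, (a : ZMod n) * y = (c : ZMod n) ∧ Nat.gcd y.val n = 1) ∧
    (Finset.univ.filter
        (fun y : ZMod n => (a : ZMod n) * y = (c : ZMod n) ∧ Nat.gcd y.val n = 1)).card
      = Nat.totient n / Nat.totient (n / Int.gcd a (n:ℤ)) := by
  classical
  set d : ℕ := Int.gcd a (n:ℤ) with hdd
  have hd0 : 0 < d := Int.gcd_pos_iff.mpr (Or.inr (by exact_mod_cast (NeZero.ne n)))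
  have hdz : (d:ℤ) ≠ 0 := by exact_mod_cast hd0.ne'
  have hdn : d ∣ n := by
    have : (d:ℤ) ∣ (n:ℤ) := Int.gcd_dvd_right _ _
    exact_mod_cast this
  set n1 : ℕ := n / d with hn1
  have hn : n = d * n1 := (Nat.mul_div_cancel' hdn).symm
  haveI : NeZero n1 := ⟨by intro h0; exact (NeZero.ne n) (by rw [hn, h0, mul_zero])⟩
  have hdvd : n1 ∣ n := Nat.div_dvd_of_dvd hdn
  -- construct a unit solution y0 = (v : ZMod n)
  have hda : (d:ℤ) ∣ a := hdd ▸ Int.gcd_dvd_left _ _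
  have hdc : (d:ℤ) ∣ c := by rw [h]; exact Int.gcd_dvd_left _ _
  have ha : (d:ℤ) * (a / d) = a := Int.mul_ediv_cancel' hda
  have hc : (d:ℤ) * (c / d) = c := Int.mul_ediv_cancel' hdc
  have cop_a1 : Int.gcd (a / d) n1 = 1 := cop_div hdd.symm hd0 hn
  have cop_c1 : Int.gcd (c / d) n1 = 1 := cop_div h.symm hd0 hn
  set a1 : ℤ := a / d
  set c1 : ℤ := c / d
  set u : ℤ := Int.gcdA a1 n1 with hu
  have hbez : 1 = a1 * u + (n1:ℤ) * Int.gcdB a1 n1 := by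
    have := Int.gcd_eq_gcd_ab a1 (n1:ℤ)
    rw [cop_a1] at this
    exact_mod_cast this
  have ha1u : (n1:ℤ) ∣ a1 * u - 1 := ⟨-Int.gcdB a1 n1, by linarith⟩
  have cop_w : Int.gcd (u * c1) n1 = 1 := by
    rw [← Int.isCoprime_iff_gcd_eq_one]
    refine IsCoprime.mul_left ⟨a1, Int.gcdB a1 n1, by linarith⟩ ?_
    rw [Int.isCoprime_iff_gcd_eq_one]
    exact cop_c1
  set w : ℤ := u * c1 with hw
  set w0 : ℕ := ((w : ZMod n1)).val with hw0
  have hw0w : (n1:ℤ) ∣ (w0:ℤ) - w := by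
    rw [← ZMod.intCast_zmod_eq_zero_iff_dvd, Int.cast_sub, Int.cast_natCast, hw0,
      ZMod.natCast_val, ZMod.cast_id, sub_self]
  have cop_w0 : Nat.Coprime w0 n1 := by
    have h1 : Int.gcd (w0:ℤ) (n1:ℤ) = 1 := (gcd_congr hw0w).trans cop_w
    simpa [Int.gcd] using h1
  obtain ⟨v, hv⟩ := ZMod.unitsMap_surjective hdvd (ZMod.unitOfCoprime w0 cop_w0)
  set y0 : ZMod n := (v : ZMod n) with hy0
  have hy0cop : Nat.gcd y0.val n = 1 := ZMod.val_coe_unit_coprime v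
  have hy0cast : (((y0.val : ℕ)) : ZMod n1) = ((w : ZMod n1)) := by
    have h1 := congrArg (fun z : (ZMod n1)ˣ => (z : ZMod n1)) hv
    simp only [ZMod.unitsMap_def, Units.coe_map, ZMod.coe_unitOfCoprime] at h1
    rw [ZMod.natCast_val]
    calc (ZMod.cast y0 : ZMod n1) = ZMod.castHom hdvd (ZMod n1) y0 := by
          rw [ZMod.castHom_apply]
      _ = ((w0 : ℕ) : ZMod n1) := h1
      _ = (w : ZMod n1) := by rw [hw0, ZMod.natCast_val, ZMod.cast_id]
  have hy0w : (n1:ℤ) ∣ (y0.val : ℤ) - w := by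
    rw [← ZMod.intCast_zmod_eq_zero_iff_dvd, Int.cast_sub, sub_eq_zero, Int.cast_natCast]
    exact hy0cast
  have hy0sol : (n:ℤ) ∣ a * (y0.val:ℤ) - c := by
    have h1 : (n1:ℤ) ∣ a1 * (y0.val:ℤ) - c1 := by
      have e1 : a1 * (y0.val:ℤ) - c1 = a1 * ((y0.val:ℤ) - w) + (a1 * u - 1) * c1 := by
        rw [hw]; ring
      rw [e1]
      exact dvd_add (hy0w.mul_left a1) (ha1u.mul_right c1)
    have e2 : a * (y0.val:ℤ) - c = (d:ℤ) * (a1 * (y0.val:ℤ) - c1) := by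
      rw [mul_sub, ← mul_assoc, ha, hc]
    rw [e2, show (n:ℤ) = (d:ℤ) * (n1:ℤ) by rw [hn]; push_cast; ring]
    exact mul_dvd_mul_left _ h1
  have hy0solz : (a : ZMod n) * y0 = (c : ZMod n) := (sol_iff a c y0).mpr hy0sol
  refine ⟨⟨y0, hy0solz, hy0cop⟩, ?_⟩
  -- counting
  set f := ZMod.unitsMap hdvd with hf
  have hfs : Function.Surjective f := ZMod.unitsMap_surjective hdvd
  -- key equivalence
  have key : ∀ g : (ZMod n)ˣ, ((a : ZMod n) * (g : ZMod n) = (c : ZMod n)) ↔ f g = f v := by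
    intro g
    rw [sol_iff]
    have e3 : a * ((g : ZMod n).val : ℤ) - c
        = a * (((g : ZMod n).val : ℤ) - ((y0.val : ℤ))) + (a * (y0.val:ℤ) - c) := by ring
    rw [e3]
    constructor
    · intro hh
      have h4 : (n:ℤ) ∣ a * (((g : ZMod n).val : ℤ) - (y0.val : ℤ)) :=
        (dvd_add_right hy0sol).mp (by rwa [add_comm] at hh)
      have h5 : (n1:ℤ) ∣ ((g : ZMod n).val : ℤ) - (y0.val : ℤ) :=
        (dvd_mul_iff_key hdd.symm hd0 hn _).mp h4
      have h6 : (((g : ZMod n).val : ℤ) : ZMod n1) = (((y0.val : ℤ)) : ZMod n1) := by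
        rw [← sub_eq_zero, ← Int.cast_sub, ZMod.intCast_zmod_eq_zero_iff_dvd]
        exact h5
      apply Units.ext
      simp only [hf, ZMod.unitsMap_def, Units.coe_map, RingHom.toMonoidHom_eq_coe,
        MonoidHom.coe_coe, ZMod.castHom_apply]
      have hg' : ((((g : ZMod n).val : ℕ)) : ZMod n1) = (((y0.val : ℕ)) : ZMod n1) := by
        exact_mod_cast h6
      rw [← ZMod.natCast_val (g : ZMod n), ← ZMod.natCast_val (v : ZMod n)] at *
      · exact_mod_cast hg'
    · intro hh
      have h6 : ((((g : ZMod n).val : ℕ)) : ZMod n1) = (((y0.val : ℕ)) : ZMod n1) := by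
        have h1 := congrArg (fun z : (ZMod n1)ˣ => (z : ZMod n1)) hh
        simp only [hf, ZMod.unitsMap_def, Units.coe_map, RingHom.toMonoidHom_eq_coe,
          MonoidHom.coe_coe, ZMod.castHom_apply] at h1
        rw [ZMod.natCast_val, ZMod.natCast_val]
        exact h1
      have h5 : (n1:ℤ) ∣ ((g : ZMod n).val : ℤ) - (y0.val : ℤ) := by
        rw [← ZMod.intCast_zmod_eq_zero_iff_dvd, Int.cast_sub, sub_eq_zero]
        exact_mod_cast h6
      have h4 : (n:ℤ) ∣ a * (((g : ZMod n).val : ℤ) - (y0.val : ℤ)) :=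
        (dvd_mul_iff_key hdd.symm hd0 hn _).mpr h5
      exact dvd_add h4 hy0sol
  -- bijection with the fiber of f over f v
  have hbij : (Finset.univ.filter
        (fun y : ZMod n => (a : ZMod n) * y = (c : ZMod n) ∧ Nat.gcd y.val n = 1)).card
      = (Finset.univ.filter (fun g : (ZMod n)ˣ => f g = f v)).card := by
    apply Finset.card_bij (fun y hy => ZMod.unitOfCoprime y.val
      (by exact (Finset.mem_filter.mp hy).2.2))
    · intro y hy
      obtain ⟨-, hy1, hy2⟩ := Finset.mem_filter.mp hy
      refine Finset.mem_filter.mpr ⟨Finset.mem_univ _, ?_⟩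
      rw [← key]
      rw [ZMod.coe_unitOfCoprime, ZMod.natCast_val, ZMod.cast_id]
      exact hy1
    · intro y hy y' hy' heq
      have := congrArg (fun z : (ZMod n)ˣ => (z : ZMod n)) heq
      simp only [ZMod.coe_unitOfCoprime] at this
      rw [ZMod.natCast_val, ZMod.natCast_val, ZMod.cast_id, ZMod.cast_id] at this
      exact this
    · intro g hg
      obtain ⟨-, hg1⟩ := Finset.mem_filter.mp hg
      refine ⟨(g : ZMod n), Finset.mem_filter.mpr ⟨Finset.mem_univ _,
        (key g).mpr hg1, ZMod.val_coe_unit_coprime g⟩, ?_⟩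
      apply Units.ext
      rw [ZMod.coe_unitOfCoprime, ZMod.natCast_val, ZMod.cast_id]
  rw [hbij, card_fiber_eq f hfs (f v), ZMod.card_units_eq_totient, ZMod.card_units_eq_totient]

private lemma level_bridge (a b : ℤ) (m t n : ℕ) [NeZero m] [NeZero n] (ht : 0 < t)
    (hm : m = t * n) (c : ℤ) (hb : b = (t:ℤ) * c) :
    (Finset.univ.filter
        (fun x : ZMod m => (a : ZMod m) * x = (b : ZMod m) ∧ Nat.gcd x.val m = t)).card
      = (Finset.univ.filter
        (fun y : ZMod n => (a : ZMod n) * y = (c : ZMod n) ∧ Nat.gcd y.val n = 1)).card := by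
  classical
  have htz : (t:ℤ) ≠ 0 := by exact_mod_cast ht.ne'
  apply Finset.card_bij (fun x (hx : x ∈ _) => (((x.val / t : ℕ)) : ZMod n))
  · intro x hx
    obtain ⟨-, hx1, hx2⟩ := Finset.mem_filter.mp hx
    have htx : t ∣ x.val := hx2 ▸ Nat.gcd_dvd_left x.val m
    have hxu : x.val = t * (x.val / t) := (Nat.mul_div_cancel' htx).symm
    have hu_lt : x.val / t < n := by
      have h1 : t * (x.val / t) < t * n := by rw [← hxu, ← hm]; exact ZMod.val_lt x
      exact lt_of_mul_lt_mul_left h1 (Nat.zero_le t)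
    have hval : ((((x.val / t : ℕ)) : ZMod n)).val = x.val / t := ZMod.val_cast_of_lt hu_lt
    refine Finset.mem_filter.mpr ⟨Finset.mem_univ _, ?_, ?_⟩
    · rw [sol_iff, hval]
      have h1 := (sol_iff a b x).mp hx1
      have e : a * ((x.val:ℕ):ℤ) - b = (t:ℤ) * (a * ((x.val / t : ℕ):ℤ) - c) := by
        rw [hb]
        nth_rewrite 1 [hxu]
        push_cast
        ring
      rw [e] at h1
      have h2 : (t:ℤ) * (n:ℤ) ∣ (t:ℤ) * (a * ((x.val / t : ℕ):ℤ) - c) := by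
        rw [show (t:ℤ) * (n:ℤ) = ((m:ℕ):ℤ) by rw [hm]; push_cast; ring]
        exact h1
      exact (mul_dvd_mul_iff_left htz).mp h2
    · rw [hval]
      have h2 : Nat.gcd (t * (x.val / t)) (t * n) = t * Nat.gcd (x.val / t) n :=
        Nat.gcd_mul_left t _ _
      rw [← hxu, ← hm, hx2] at h2
      exact (mul_left_cancel₀ ht.ne' ((mul_one t).trans h2)).symm
  · intro x hx x' hx' heq
    obtain ⟨-, -, hx2⟩ := Finset.mem_filter.mp hx
    obtain ⟨-, -, hx2'⟩ := Finset.mem_filter.mp hx'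
    have htx : t ∣ x.val := hx2 ▸ Nat.gcd_dvd_left x.val m
    have htx' : t ∣ x'.val := hx2' ▸ Nat.gcd_dvd_left x'.val m
    have hu_lt : x.val / t < n := by
      have h1 : t * (x.val / t) < t * n := by
        rw [Nat.mul_div_cancel' htx, ← hm]; exact ZMod.val_lt x
      exact lt_of_mul_lt_mul_left h1 (Nat.zero_le t)
    have hu_lt' : x'.val / t < n := by
      have h1 : t * (x'.val / t) < t * n := by
        rw [Nat.mul_div_cancel' htx', ← hm]; exact ZMod.val_lt x'
      exact lt_of_mul_lt_mul_left h1 (Nat.zero_le t)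
    have := congrArg ZMod.val heq
    rw [ZMod.val_cast_of_lt hu_lt, ZMod.val_cast_of_lt hu_lt'] at this
    have hvv : x.val = x'.val := by
      rw [← Nat.mul_div_cancel' htx, ← Nat.mul_div_cancel' htx', this]
    have h1 : ((x.val : ℕ) : ZMod m) = ((x'.val : ℕ) : ZMod m) := by rw [hvv]
    rwa [ZMod.natCast_val, ZMod.natCast_val, ZMod.cast_id, ZMod.cast_id] at h1
  · intro y hy
    obtain ⟨-, hy1, hy2⟩ := Finset.mem_filter.mp hy
    refine ⟨((t * y.val : ℕ) : ZMod m), ?_, ?_⟩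
    · have hlt : t * y.val < m := by
        rw [hm]
        exact (Nat.mul_lt_mul_left ht).mpr (ZMod.val_lt y)
      have hxval : (((t * y.val : ℕ) : ZMod m)).val = t * y.val := ZMod.val_cast_of_lt hlt
      refine Finset.mem_filter.mpr ⟨Finset.mem_univ _, ?_, ?_⟩
      · rw [sol_iff, hxval]
        have h1 := (sol_iff a c y).mp hy1
        have e : a * ((t * y.val : ℕ) : ℤ) - b = (t:ℤ) * (a * ((y.val:ℕ):ℤ) - c) := by
          rw [hb]; push_cast; ring
        rw [e, hm]
        push_cast
        exact mul_dvd_mul_left (t:ℤ) h1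
      · rw [hxval, hm, Nat.gcd_mul_left, hy2, mul_one]
    · have hlt : t * y.val < m := by
        rw [hm]
        exact (Nat.mul_lt_mul_left ht).mpr (ZMod.val_lt y)
      have hxval : (((t * y.val : ℕ) : ZMod m)).val = t * y.val := ZMod.val_cast_of_lt hlt
      rw [hxval, Nat.mul_div_cancel_left _ ht, ZMod.natCast_val, ZMod.cast_id]

theorem single_restricted_congruence (a b : ℤ) (m t : ℕ) [NeZero m] (ht : 0 < t) :
    ((∃ x : ZMod m, (a : ZMod m) * x = (b : ZMod m) ∧ Nat.gcd x.val m = t) ↔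
      (t ∣ Int.gcd b m ∧ Int.gcd a ((m / t : ℕ) : ℤ) = Int.gcd (b / t) ((m / t : ℕ) : ℤ))) ∧
    ((t ∣ Int.gcd b m ∧ Int.gcd a ((m / t : ℕ) : ℤ) = Int.gcd (b / t) ((m / t : ℕ) : ℤ)) →
      (Finset.univ.filter
          (fun x : ZMod m => (a : ZMod m) * x = (b : ZMod m) ∧ Nat.gcd x.val m = t)).card =
        Nat.totient (m / t) / Nat.totient (m / (t * Int.gcd a ((m / t : ℕ) : ℤ)))) := by
  have forward : (∃ x : ZMod m, (a : ZMod m) * x = (b : ZMod m) ∧ Nat.gcd x.val m = t) →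
      (t ∣ Int.gcd b m ∧ Int.gcd a ((m / t : ℕ) : ℤ) = Int.gcd (b / t) ((m / t : ℕ) : ℤ)) := by
    rintro ⟨x, hx1, hx2⟩
    have ht_m : t ∣ m := hx2 ▸ Nat.gcd_dvd_right x.val m
    have ht_x : t ∣ x.val := hx2 ▸ Nat.gcd_dvd_left x.val m
    have hsol := (sol_iff a b x).mp hx1
    have ht_b : (t:ℤ) ∣ b := by
      have h1 : (t:ℤ) ∣ a * (x.val:ℤ) := Dvd.dvd.mul_left (by exact_mod_cast ht_x) a
      have h2 : (t:ℤ) ∣ a * (x.val:ℤ) - b := dvd_trans (by exact_mod_cast ht_m) hsol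
      have := dvd_sub h1 h2
      simpa using this
    have hc : b = (t:ℤ) * (b / t) := (Int.mul_ediv_cancel' ht_b).symm
    have hm' : m = t * (m / t) := (Nat.mul_div_cancel' ht_m).symm
    haveI : NeZero (m / t) := ⟨by intro h0; exact (NeZero.ne m) (by rw [hm', h0, mul_zero])⟩
    constructor
    · have hb' : t ∣ b.natAbs := by
        rwa [← Int.natAbs_natCast t, Int.natAbs_dvd_natAbs]
      have h3 : t ∣ Nat.gcd b.natAbs m := Nat.dvd_gcd hb' ht_m
      simpa [Int.gcd] using h3
    · have hbr := level_bridge a b m t (m / t) ht hm' (b / t) hc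
      have hS : 0 < (Finset.univ.filter
          (fun x : ZMod m => (a : ZMod m) * x = (b : ZMod m) ∧ Nat.gcd x.val m = t)).card :=
        Finset.card_pos.mpr ⟨x, Finset.mem_filter.mpr ⟨Finset.mem_univ _, hx1, hx2⟩⟩
      rw [hbr] at hS
      obtain ⟨y, hy⟩ := Finset.card_pos.mp hS
      obtain ⟨-, hy1, hy2⟩ := Finset.mem_filter.mp hy
      have h4 : Int.gcd a ((m / t : ℕ):ℤ) = Int.gcd (a * (y.val:ℤ)) ((m / t : ℕ):ℤ) :=
        (gcd_mul_coprime hy2).symm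
      rw [h4]
      exact gcd_congr ((sol_iff a (b / t) y).mp hy1)
  refine ⟨⟨forward, ?_⟩, ?_⟩
  · rintro ⟨h1, h2⟩
    have hg_m : Int.gcd b (m:ℤ) ∣ m := by
      have : (↑(Int.gcd b (m:ℤ)):ℤ) ∣ (m:ℤ) := Int.gcd_dvd_right _ _
      exact_mod_cast this
    have ht_m : t ∣ m := h1.trans hg_m
    have ht_b : (t:ℤ) ∣ b := by
      have h3 : (↑(Int.gcd b (m:ℤ)):ℤ) ∣ b := Int.gcd_dvd_left _ _
      exact dvd_trans (by exact_mod_cast h1) h3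
    have hc : b = (t:ℤ) * (b / t) := (Int.mul_ediv_cancel' ht_b).symm
    have hm' : m = t * (m / t) := (Nat.mul_div_cancel' ht_m).symm
    haveI : NeZero (m / t) := ⟨by intro h0; exact (NeZero.ne m) (by rw [hm', h0, mul_zero])⟩
    obtain ⟨y, hy1, hy2⟩ := (unit_level (m / t) a (b / t) h2).1
    have hbr := level_bridge a b m t (m / t) ht hm' (b / t) hc
    have hT : 0 < (Finset.univ.filter
        (fun y : ZMod (m / t) => (a : ZMod (m / t)) * y = ((b / t : ℤ) : ZMod (m / t)) ∧
          Nat.gcd y.val (m / t) = 1)).card :=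
      Finset.card_pos.mpr ⟨y, Finset.mem_filter.mpr ⟨Finset.mem_univ _, hy1, hy2⟩⟩
    rw [← hbr] at hT
    obtain ⟨x, hx⟩ := Finset.card_pos.mp hT
    obtain ⟨-, hx1, hx2⟩ := Finset.mem_filter.mp hx
    exact ⟨x, hx1, hx2⟩
  · rintro ⟨h1, h2⟩
    have hg_m : Int.gcd b (m:ℤ) ∣ m := by
      have : (↑(Int.gcd b (m:ℤ)):ℤ) ∣ (m:ℤ) := Int.gcd_dvd_right _ _
      exact_mod_cast this
    have ht_m : t ∣ m := h1.trans hg_m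
    have ht_b : (t:ℤ) ∣ b := by
      have h3 : (↑(Int.gcd b (m:ℤ)):ℤ) ∣ b := Int.gcd_dvd_left _ _
      exact dvd_trans (by exact_mod_cast h1) h3
    have hc : b = (t:ℤ) * (b / t) := (Int.mul_ediv_cancel' ht_b).symm
    have hm' : m = t * (m / t) := (Nat.mul_div_cancel' ht_m).symm
    haveI : NeZero (m / t) := ⟨by intro h0; exact (NeZero.ne m) (by rw [hm', h0, mul_zero])⟩
    rw [level_bridge a b m t (m / t) ht hm' (b / t) hc, (unit_level (m / t) a (b / t) h2).2]
    congr 1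
    rw [Nat.div_div_eq_div_mul]
end

section
/- Let $m_1, \dots, m_n$ be positive integers, $b$ an integer, and $m$ a positive integer with $\mathrm{lcm}(m_1, \dots, m_n) \mid m$. Define $E(b; m_1, \dots, m_n) = \frac{1}{m} \sum_{j=1}^m C_{m_1}(j) \cdots C_{m_n}(j) e^{2\pi i b j / m}$. Then $\sum_{d_1 \mid m_1, \dots, d_n \mid m_n} E(b; d_1, \dots, d_n) = J(b; m_1, \dots, m_n)$, where $J(b; m_1, \dots, m_n) = \frac{m_1 \cdots m_n}{\mathrm{lcm}(m_1, \dots, m_n)}$ if $\frac{m}{\mathrm{lcm}(m_1, \dots, m_n)} \mid b$, and $0$ otherwise. -/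
open scoped Classical

noncomputable def Efun (m : ℕ) (b : ℤ) {n : ℕ} (mv : Fin n → ℕ) : ℂ :=
  (1 / (m : ℂ)) * ∑ j ∈ Finset.Icc 1 m,
    (∏ i, ramanujanSum (mv i) j) * Complex.exp (2 * Real.pi * Complex.I * b * j / m)

lemma geomSum' (M : ℕ) (hM : 0 < M) (b : ℤ) :
    ∑ j ∈ Finset.Icc 1 M, Complex.exp (2 * Real.pi * Complex.I * b * j / M) =
      if (M:ℤ) ∣ b then (M:ℂ) else 0 := by
  have hMC : (M:ℂ) ≠ 0 := Nat.cast_ne_zero.mpr hM.ne'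
  have hpi : (2 * (Real.pi:ℂ) * Complex.I) ≠ 0 := by
    simp [Real.pi_ne_zero, Complex.I_ne_zero]
  set z := Complex.exp (2 * Real.pi * Complex.I * b / M) with hz
  have hterm : ∀ j : ℕ, Complex.exp (2 * Real.pi * Complex.I * b * j / M) = z ^ j := by
    intro j
    rw [hz, ← Complex.exp_nat_mul]
    congr 1; push_cast; ring
  simp_rw [hterm]
  by_cases hdvd : (M:ℤ) ∣ b
  · obtain ⟨c, rfl⟩ := hdvd
    have hz1 : z = 1 := by
      rw [hz, Complex.exp_eq_one_iff]
      refine ⟨c, ?_⟩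
      push_cast
      field_simp
    simp [hz1, Nat.card_Icc]
  · have hz1 : z ≠ 1 := by
      intro h
      rw [hz, Complex.exp_eq_one_iff] at h
      obtain ⟨k, hk⟩ := h
      apply hdvd
      refine ⟨k, ?_⟩
      field_simp at hk
      have hb : (b:ℂ) = (M:ℂ) * k := by
        apply mul_left_cancel₀ hpi
        linear_combination (2 * (Real.pi:ℂ) * Complex.I) * hk
      exact_mod_cast hb
    have hzM : z ^ M = 1 := by
      rw [hz, ← Complex.exp_nat_mul]
      have : (M:ℂ) * (2 * Real.pi * Complex.I * b / M) = (b:ℂ) * (2 * Real.pi * Complex.I) := by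
        field_simp
      rw [this, Complex.exp_int_mul_two_pi_mul_I]
    have : ∑ j ∈ Finset.Icc 1 M, z ^ j = z * ((z ^ M - 1) / (z - 1)) := by
      rw [← Finset.Ico_add_one_right_eq_Icc, Finset.sum_Ico_eq_sum_range, ← geom_sum_eq hz1, Finset.mul_sum]
      simp [pow_succ, pow_add, mul_comm]
    rw [this, hzM]
    simp [hdvd]

lemma sum_ramanujan (N : ℕ) (hN : 0 < N) (a : ℤ) :
    ∑ d ∈ N.divisors, ramanujanSum d a = if (N:ℤ) ∣ a then (N:ℂ) else 0 := by
  rw [← geomSum' N hN a]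
  unfold ramanujanSum
  rw [Finset.sum_sigma']
  refine Finset.sum_nbij' (fun p => p.2 * (N / p.1)) (fun x => ⟨N / Nat.gcd x N, x / Nat.gcd x N⟩)
    ?_ ?_ ?_ ?_ ?_
  · rintro ⟨d, k⟩ hp
    simp only [Finset.mem_sigma, Nat.mem_divisors, Finset.mem_filter, Finset.mem_Icc] at hp
    obtain ⟨⟨hdN, -⟩, ⟨hk1, hkd⟩, -⟩ := hp
    have hd0 : 0 < d := Nat.pos_of_dvd_of_pos hdN hN
    simp only [Finset.mem_Icc]
    have hnd0 : 0 < N / d := Nat.div_pos (Nat.le_of_dvd hN hdN) hd0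
    constructor
    · exact Nat.mul_pos hk1 hnd0
    · calc k * (N / d) ≤ d * (N / d) := Nat.mul_le_mul_right _ hkd
        _ = N := Nat.mul_div_cancel' hdN
  · rintro x hx
    simp only [Finset.mem_Icc] at hx
    obtain ⟨hx1, hxN⟩ := hx
    have hx0 : 0 < x := hx1
    have hg : 0 < Nat.gcd x N := Nat.gcd_pos_of_pos_left _ hx0
    have hgN : Nat.gcd x N ∣ N := Nat.gcd_dvd_right x N
    have hgx : Nat.gcd x N ∣ x := Nat.gcd_dvd_left x N
    simp only [Finset.mem_sigma, Nat.mem_divisors, Finset.mem_filter, Finset.mem_Icc]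
    refine ⟨⟨Nat.div_dvd_of_dvd hgN, hN.ne'⟩, ⟨?_, Nat.div_le_div_right hxN⟩, ?_⟩
    · exact Nat.one_le_div_iff hg |>.mpr (Nat.le_of_dvd hx0 hgx)
    · exact Nat.coprime_div_gcd_div_gcd hg
  · rintro ⟨d, k⟩ hp
    simp only [Finset.mem_sigma, Nat.mem_divisors, Finset.mem_filter, Finset.mem_Icc] at hp
    obtain ⟨⟨hdN, -⟩, ⟨hk1, hkd⟩, hcop⟩ := hp
    have hd0 : 0 < d := Nat.pos_of_dvd_of_pos hdN hN
    have hnd0 : 0 < N / d := Nat.div_pos (Nat.le_of_dvd hN hdN) hd0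
    have hNeq : N = d * (N / d) := (Nat.mul_div_cancel' hdN).symm
    have hgcd : Nat.gcd (k * (N/d)) N = N / d := by
      nth_rewrite 2 [hNeq]
      rw [Nat.gcd_mul_right, hcop, one_mul]
    ext
    · simp only [hgcd]
      rw [Nat.div_div_self hdN hN.ne']
    · simp only [hgcd]
      rw [Nat.mul_div_cancel _ hnd0]
  · rintro x hx
    simp only [Finset.mem_Icc] at hx
    have hg : 0 < Nat.gcd x N := Nat.gcd_pos_of_pos_left _ hx.1
    simp only
    rw [Nat.div_div_self (Nat.gcd_dvd_right x N) hN.ne',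
      Nat.div_mul_cancel (Nat.gcd_dvd_left x N)]
  · rintro ⟨d, k⟩ hp
    simp only [Finset.mem_sigma, Nat.mem_divisors, Finset.mem_filter, Finset.mem_Icc] at hp
    obtain ⟨⟨hdN, -⟩, ⟨hk1, hkd⟩, hcop⟩ := hp
    have hd0 : 0 < d := Nat.pos_of_dvd_of_pos hdN hN
    congr 1
    have hdC : (d:ℂ) ≠ 0 := Nat.cast_ne_zero.mpr hd0.ne'
    have hNC : (N:ℂ) ≠ 0 := Nat.cast_ne_zero.mpr hN.ne'
    have hmul : (d:ℂ) * ((N/d : ℕ):ℂ) = N := by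
      rw [← Nat.cast_mul, Nat.mul_div_cancel' hdN]
    rw [div_eq_div_iff hdC hNC]
    push_cast
    linear_combination (-(2 * (Real.pi:ℂ) * Complex.I * (k:ℂ) * (a:ℂ))) * hmul

theorem sum_Efun_eq (n m : ℕ) (hm : 0 < m) (mv : Fin n → ℕ) (hpos : ∀ i, 0 < mv i)
    (b : ℤ) (hL : Finset.lcm Finset.univ mv ∣ m) :
    ∑ d ∈ Fintype.piFinset (fun i => (mv i).divisors), Efun m b d =
      if ((m / Finset.lcm Finset.univ mv : ℕ) : ℤ) ∣ b then
        ((∏ i, mv i : ℕ) : ℂ) / ((Finset.lcm Finset.univ mv : ℕ) : ℂ)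
      else 0 := by
  classical
  set L := Finset.lcm Finset.univ mv with hLdef
  have hL0 : 0 < L := by
    rcases Nat.eq_zero_or_pos L with h | h
    · exfalso; rw [h] at hL; exact hm.ne' (Nat.eq_zero_of_zero_dvd hL)
    · exact h
  have hML0 : 0 < m / L := Nat.div_pos (Nat.le_of_dvd hm hL) hL0
  have hmC : (m:ℂ) ≠ 0 := Nat.cast_ne_zero.mpr hm.ne'
  have hLC : (L:ℂ) ≠ 0 := Nat.cast_ne_zero.mpr hL0.ne'
  have hmlC : ((m/L : ℕ):ℂ) ≠ 0 := Nat.cast_ne_zero.mpr hML0.ne'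
  have hMeq : (L:ℂ) * ((m/L : ℕ):ℂ) = (m:ℂ) := by
    rw [← Nat.cast_mul, Nat.mul_div_cancel' hL]
  have step1 : ∑ d ∈ Fintype.piFinset (fun i => (mv i).divisors), Efun m b d
      = (1/(m:ℂ)) * ∑ j ∈ Finset.Icc 1 m,
          (∑ d ∈ Fintype.piFinset (fun i => (mv i).divisors),
            ∏ i, ramanujanSum (d i) j) *
          Complex.exp (2 * Real.pi * Complex.I * b * j / m) := by
    unfold Efun
    rw [← Finset.mul_sum]
    congr 1
    rw [Finset.sum_comm]
    exact Finset.sum_congr rfl fun j _ => (Finset.sum_mul _ _ _).symm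
  have step2 : ∀ j : ℕ, (∑ d ∈ Fintype.piFinset (fun i => (mv i).divisors),
        ∏ i, ramanujanSum (d i) j)
      = if (L:ℤ) ∣ (j:ℤ) then ((∏ i, mv i : ℕ):ℂ) else 0 := by
    intro j
    rw [← Finset.prod_univ_sum (fun i => (mv i).divisors) (fun i t => ramanujanSum t (j:ℤ))]
    have hs : ∀ i : Fin n, ∑ t ∈ (mv i).divisors, ramanujanSum t j
        = if ((mv i):ℤ) ∣ (j:ℤ) then ((mv i):ℂ) else 0 :=
      fun i => sum_ramanujan _ (hpos i) _
    simp_rw [hs]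
    by_cases hLj : (L:ℤ) ∣ (j:ℤ)
    · have hall : ∀ i, ((mv i):ℤ) ∣ (j:ℤ) := fun i =>
        dvd_trans (Int.natCast_dvd_natCast.mpr (Finset.dvd_lcm (Finset.mem_univ i))) hLj
      rw [if_pos hLj]
      push_cast
      exact Finset.prod_congr rfl fun i _ => if_pos (hall i)
    · rw [if_neg hLj]
      have hex : ∃ i, ¬ ((mv i):ℤ) ∣ (j:ℤ) := by
        by_contra h
        push_neg at h
        exact hLj (Int.natCast_dvd_natCast.mpr
          (Finset.lcm_dvd fun i _ => Int.natCast_dvd_natCast.mp (h i)))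
      obtain ⟨i, hi⟩ := hex
      exact Finset.prod_eq_zero (Finset.mem_univ i) (if_neg hi)
  rw [step1]
  simp_rw [step2, ite_mul, zero_mul, Finset.sum_ite, Finset.sum_const_zero, add_zero]
  have step3 : ∑ j ∈ (Finset.Icc 1 m).filter (fun j : ℕ => (L:ℤ) ∣ (j:ℤ)),
        ((∏ i, mv i : ℕ):ℂ) * Complex.exp (2 * Real.pi * Complex.I * b * j / m)
      = ((∏ i, mv i : ℕ):ℂ) *
          ∑ k ∈ Finset.Icc 1 (m/L),
            Complex.exp (2 * Real.pi * Complex.I * b * k / ((m/L : ℕ):ℂ)) := by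
    rw [Finset.mul_sum]
    refine (Finset.sum_nbij' (fun k => L * k) (fun a => a / L) ?_ ?_ ?_ ?_ ?_).symm
    · intro k hk
      simp only [Finset.mem_Icc] at hk
      simp only [Finset.mem_filter, Finset.mem_Icc]
      refine ⟨⟨Nat.mul_pos hL0 hk.1, ?_⟩, ?_⟩
      · calc L * k ≤ L * (m/L) := Nat.mul_le_mul_left _ hk.2
          _ = m := Nat.mul_div_cancel' hL
      · exact Int.natCast_dvd_natCast.mpr ⟨k, rfl⟩
    · intro a ha
      simp only [Finset.mem_filter, Finset.mem_Icc] at ha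
      obtain ⟨⟨ha1, ham⟩, hdvd⟩ := ha
      have hdvd' : L ∣ a := Int.natCast_dvd_natCast.mp hdvd
      simp only [Finset.mem_Icc]
      exact ⟨(Nat.one_le_div_iff hL0).mpr (Nat.le_of_dvd ha1 hdvd'),
        Nat.div_le_div_right ham⟩
    · intro k hk
      exact Nat.mul_div_cancel_left _ hL0
    · intro a ha
      simp only [Finset.mem_filter, Finset.mem_Icc] at ha
      exact Nat.mul_div_cancel' (Int.natCast_dvd_natCast.mp ha.2)
    · intro k hk
      congr 1
      apply congrArg Complex.exp
      rw [div_eq_div_iff hmlC hmC]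
      push_cast
      linear_combination (-(2 * (Real.pi:ℂ) * Complex.I * (b:ℂ) * (k:ℂ))) * hMeq
  rw [step3, geomSum' (m/L) hML0 b]
  by_cases hb : ((m/L : ℕ):ℤ) ∣ b
  · rw [if_pos hb, if_pos hb]
    field_simp
    try linear_combination ((∏ i, mv i : ℕ):ℂ) * hMeq
    try linear_combination (-((∏ i, mv i : ℕ):ℂ)) * hMeq
  · rw [if_neg hb, if_neg hb, mul_zero, mul_zero]
end
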